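/- arXiv:1301.4624 — 6 statements merged into one kernel-verified Lean document; each statement's English description precedes it below -/
import Mathlib

section
/- Let S be a well-ordered space, let I ⊆ S, let (I,<<) denote the set I equipped with the order topology of its inherited order, and let α : (I,<<) → S be the inclusion function. Then the following are equivalent: (1) α is continuous; (2) α is a topological embedding; (3) I is a closed subset of S or I is almost closed in S. -/
open Set Topology TopologicalSpace

universe u v w

/-- The order topology on `WithTop α`; for a noncompact well-ordered `α` with the order
topology, `WithTop α` with this topology is the one-point (Alexandroff) compactification
`α ∪ {∞_α}`, in which `⊤ = ∞_α` is the maximum. -/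
noncomputable instance withTopOrderTopology {α : Type*} [Preorder α] :
    TopologicalSpace (WithTop α) := Preorder.topology _

/-- `I` is almost closed in the ordered topological space `S`:
`closure I \ I = {ℓ}` where `ℓ = min {s ∈ S | I < s}`. -/
def AlmostClosedIn {S : Type*} [LinearOrder S] [TopologicalSpace S] (I : Set S) : Prop :=
  ∃ ℓ : S, closure I \ I = {ℓ} ∧ IsLeast {s : S | ∀ i ∈ I, i < s} ℓ

/-- `I ⊆ J` is almost closed in `J ∪ {∞_J}` (modeled as `WithTop J` with the order topology). -/
def AlmostClosed {J : Type*} [LinearOrder J] (I : Set J) : Prop :=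
  AlmostClosedIn ((fun j : J => (j : WithTop J)) '' I)

/-- A subset `C ⊆ X` is `J`-closed: for every almost closed `I ⊆ J` and continuous
`f : I ∪ {∞_I} → X` (where `I ∪ {∞_I} = WithTop ↥I` is the one-point compactification of
`I` with its internal order topology) with `f(I) ⊆ C` one has `f(∞_I) ∈ C`. -/
def JClosedSet (J : Type v) [LinearOrder J] (X : Type u) [TopologicalSpace X] (C : Set X) : Prop :=
  ∀ I : Set J, AlmostClosed I → ∀ f : WithTop ↥I → X, Continuous f →
    (∀ i : ↥I, f (WithTop.some i) ∈ C) → f ⊤ ∈ C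

/-- `U ⊆ X` is `J`-open iff its complement is `J`-closed. -/
def JOpenSet (J : Type v) [LinearOrder J] (X : Type u) [TopologicalSpace X] (U : Set X) : Prop :=
  JClosedSet J X Uᶜ

/-- `X` is a `J`-convergence space. -/
def IsJConvergence (J : Type v) [LinearOrder J] (X : Type u) [TopologicalSpace X] : Prop :=
  ∀ A : Set X, ¬ IsClosed A →
    ∃ I : Set J, AlmostClosed I ∧ ∃ f : WithTop ↥I → X, Continuous f ∧
      (∀ i : ↥I, f (WithTop.some i) ∈ A) ∧ f ⊤ ∉ A

/-- `JX`: the topology of `J`-open sets. -/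
noncomputable def jTop (J : Type v) [LinearOrder J] (X : Type u) [tX : TopologicalSpace X] :
    TopologicalSpace X := generateFrom {U : Set X | JOpenSet J X U}

/-- `K` is a compact Hausdorff witness for the failure of `A` to be closed. -/
def CGWitness (K : Type v) [tK : TopologicalSpace K] (X : Type u) [TopologicalSpace X]
    (A : Set X) : Prop :=
  CompactSpace K ∧ T2Space K ∧ ∃ f : K → X, Continuous f ∧ ¬ IsClosed (f ⁻¹' A)

/-- `X` is compactly generated. -/
def CompactlyGen.{v', u'} (X : Type u') [TopologicalSpace X] : Prop :=
  ∀ A : Set X, ¬ IsClosed A → ∃ (K : Type v') (tK : TopologicalSpace K), @CGWitness K tK X _ A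

/-- `kX`: `U` is open iff `f ⁻¹ U` is open for every continuous map from a compact
Hausdorff space. -/
def kTop.{v', u'} (X : Type u') [tX : TopologicalSpace X] : TopologicalSpace X :=
  generateFrom {U : Set X |
    ∀ (K : Type v') (tK : TopologicalSpace K), @CompactSpace K tK → @T2Space K tK →
      ∀ f : K → X, Continuous[tK, tX] f → IsOpen[tK] (f ⁻¹' U)}

/-- The directed topology on the successor `J' ∪ {∞} = WithTop J'`: generated by singletons
`{j}` and final segments `(j, ∞]` for `j ∈ J'`. -/
def directedTopology (J' : Type*) [Preorder J'] : TopologicalSpace (WithTop J') :=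
  generateFrom {s : Set (WithTop J') |
    (∃ j : J', s = {WithTop.some j}) ∨ ∃ j : J', s = Ioi (WithTop.some j)}

/-- `J'` witnesses transfinite convergence into `A`. -/
def TransfiniteWitness (J' : Type v) [LinearOrder J'] (X : Type u) [TopologicalSpace X]
    (A : Set X) : Prop :=
  WellFoundedLT J' ∧ Nonempty J' ∧ NoMaxOrder J' ∧
    ∃ f : WithTop J' → X, Continuous[directedTopology J', _] f ∧
      (∀ j : J', f (WithTop.some j) ∈ A) ∧ f ⊤ ∉ A

/-- `X` is a transfinite sequential space. -/
def TransfiniteSequential.{v', u'} (X : Type u') [TopologicalSpace X] : Prop :=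
  ∀ A : Set X, ¬ IsClosed A →
    ∃ (J' : Type v') (lo : LinearOrder J'), @TransfiniteWitness J' lo X _ A

/-- `X` is a `J`-unique convergence space. -/
def JUnique (J : Type v) [LinearOrder J] (X : Type u) [TopologicalSpace X] : Prop :=
  ∀ I : Set J, AlmostClosed I → ∀ f g : WithTop ↥I → X, Continuous f → Continuous g →
    (∀ i : ↥I, f (WithTop.some i) = g (WithTop.some i)) → f = g

/-- The set `M(X,Y)` of continuous maps between spaces with explicitly given topologies. -/
def Cts (X : Type u) (Y : Type w) (tX : TopologicalSpace X) (tY : TopologicalSpace Y) :=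
  {f : X → Y // Continuous[tX, tY] f}

/-- The `𝒥`-open topology on `M(X,Y)`, generated by the sets `W(t,U)`. -/
noncomputable def mjTop (J : Type v) [LinearOrder J] {X : Type u} {Y : Type w}
    (tX : TopologicalSpace X) (tY : TopologicalSpace Y) :
    TopologicalSpace (Cts X Y tX tY) :=
  generateFrom {W : Set (Cts X Y tX tY) |
    ∃ I : Set J, AlmostClosed I ∧ ∃ t : WithTop ↥I → X, Continuous[_, tX] t ∧
      ∃ U : Set Y, IsOpen[tY] U ∧ W = {f | ∀ z : WithTop ↥I, f.1 (t z) ∈ U}}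

section Aux
set_option linter.unusedSectionVars false
variable {S : Type u} [LinearOrder S] [WellFoundedLT S] [TopologicalSpace S] [OrderTopology S]

lemma aux_exists_least {A : Set S} (h : A.Nonempty) : ∃ m ∈ A, ∀ x ∈ A, m ≤ x := by
  obtain ⟨m, hm, hmin⟩ := (IsWellFounded.wf : WellFounded ((· < ·) : S → S → Prop)).has_min A h
  exact ⟨m, hm, fun x hx => not_lt.1 (hmin x hx)⟩

lemma aux_induced_le (I : Set S) :
    TopologicalSpace.induced (Subtype.val : ↥I → S) ‹TopologicalSpace S›
      ≤ Preorder.topology ↥I := by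
  apply le_generateFrom
  rintro s ⟨a, rfl | rfl⟩
  · exact ⟨Ioi ↑a, isOpen_Ioi, rfl⟩
  · exact ⟨Iio ↑a, isOpen_Iio, rfl⟩

lemma aux_cont (I : Set S) (h : IsClosed I ∨ AlmostClosedIn I) :
    @Continuous ↥I S (Preorder.topology ↥I) _ Subtype.val := by
  letI : TopologicalSpace ↥I := Preorder.topology ↥I
  haveI : OrderTopology ↥I := ⟨rfl⟩
  rw [continuous_iff_le_induced, OrderTopology.topology_eq_generate_intervals (α := S),
    Preorder.topology.eq_1 S, induced_generateFrom_eq]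
  apply le_generateFrom
  rintro s ⟨u, ⟨a, rfl | rfl⟩, rfl⟩
  · -- preimage of Ioi a : {i | a < ↑i}
    by_cases hne : ((Subtype.val : ↥I → S) ⁻¹' Ioi a).Nonempty
    · obtain ⟨m, hm, hmin⟩ : ∃ m : ↥I, a < (m : S) ∧ ∀ i : ↥I, a < (i : S) → m ≤ i := by
        obtain ⟨i₁, hi₁⟩ := hne
        obtain ⟨m, hm, hmin⟩ := aux_exists_least (A := I ∩ Ioi a) ⟨i₁.1, i₁.2, hi₁⟩
        exact ⟨⟨m, hm.1⟩, hm.2, fun i hi => Subtype.coe_le_coe.1 (hmin i.1 ⟨i.2, hi⟩)⟩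
      have heq : (Subtype.val : ↥I → S) ⁻¹' Ioi a = Ici m := by
        ext i
        exact ⟨fun hi => hmin i hi, fun hi => lt_of_lt_of_le hm hi⟩
      rw [heq]
      by_cases hbot : ∀ i : ↥I, m ≤ i
      · have : Ici m = (univ : Set ↥I) := eq_univ_of_forall fun i => hbot i
        rw [this]; exact isOpen_univ
      · push_neg at hbot
        obtain ⟨i₀, hi₀⟩ := hbot
        have hi₀' : i₀ < m := hi₀
        by_cases hmax : ∃ b : ↥I, b < m ∧ ∀ i : ↥I, i < m → i ≤ b
        · obtain ⟨b, hb, hbmax⟩ := hmax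
          have : Ici m = Ioi b := by
            ext i
            constructor
            · exact fun hi => lt_of_lt_of_le hb hi
            · intro hi
              by_contra hlt
              exact absurd (hbmax i (lt_of_not_ge hlt)) (not_le.2 hi)
          rw [this]; exact isOpen_Ioi
        · -- no max below m: derive a contradiction with closed/almost closed
          exfalso
          push_neg at hmax
          set J : Set S := I ∩ Iio (m : S) with hJ
          have hJI : J ⊆ I := inter_subset_left
          have hJne : J.Nonempty := ⟨i₀.1, i₀.2, hi₀'⟩
          have hJa : ∀ t ∈ J, t < a := by
            rintro t ⟨htI, htm⟩
            rcases lt_trichotomy t a with h' | rfl | h'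
            · exact h'
            · obtain ⟨i', hi'm, hi't⟩ := hmax ⟨t, htI⟩ htm
              exact absurd (hmin i' (Subtype.coe_lt_coe.2 hi't)) (not_le.2 hi'm)
            · exact absurd (hmin ⟨t, htI⟩ h') (not_le.2 htm)
          -- J has no maximum (in S)
          have hnomax : ∀ b ∈ J, ∃ t ∈ J, b < t := by
            rintro b ⟨hbI, hbm⟩
            obtain ⟨i', hi'm, hi'b⟩ := hmax ⟨b, hbI⟩ hbm
            exact ⟨i'.1, ⟨i'.2, hi'm⟩, hi'b⟩
          -- least strict upper bound ℓ of J
          obtain ⟨ℓ, hℓmem, hℓmin⟩ := aux_exists_least (A := {s : S | ∀ t ∈ J, t < s})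
            ⟨m, fun t ht => ht.2⟩
          have hlub : IsLUB J ℓ := by
            constructor
            · exact fun t ht => (hℓmem t ht).le
            · intro b hb
              apply hℓmin
              intro t ht
              rcases eq_or_lt_of_le (hb ht) with rfl | h'
              · obtain ⟨t', ht', htt'⟩ := hnomax t ht
                exact absurd (hb ht') (not_le.2 htt')
              · exact h'
          have hℓa : ℓ ≤ a := hℓmin a (fun t ht => hJa t ht)
          have hℓm : ℓ < (m : S) := lt_of_le_of_lt hℓa hm
          have hℓcl : ℓ ∈ closure I := closure_mono hJI (hlub.mem_closure hJne)
          have hℓI : ℓ ∉ I := fun hℓI =>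
            absurd (hℓmem ℓ ⟨hℓI, hℓm⟩) (lt_irrefl ℓ)
          rcases h with hcl | ⟨ℓ₀, hdiff, hleast⟩
          · exact hℓI (hcl.closure_subset hℓcl)
          · have : ℓ = ℓ₀ := by
              have : ℓ ∈ ({ℓ₀} : Set S) := hdiff ▸ ⟨hℓcl, hℓI⟩
              exact this
            have hm' : (m : S) < ℓ₀ := hleast.1 m.1 m.2
            rw [← this] at hm'
            exact absurd (lt_trans hm' hℓm) (lt_irrefl _)
    · rw [not_nonempty_iff_eq_empty] at hne
      rw [hne]; exact isOpen_empty
  · -- preimage of Iio a : {i | ↑i < a}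
    by_cases hne : (I ∩ {s | a ≤ s}).Nonempty
    · obtain ⟨m, hm, hmin⟩ := aux_exists_least hne
      have heq : (Subtype.val : ↥I → S) ⁻¹' Iio a = Iio ⟨m, hm.1⟩ := by
        ext i
        constructor
        · intro hi
          exact Subtype.coe_lt_coe.1 (lt_of_lt_of_le hi hm.2)
        · intro hi
          by_contra hle
          exact absurd (hmin i.1 ⟨i.2, not_lt.1 hle⟩) (not_le.2 hi)
      rw [heq]; exact isOpen_Iio
    · have : (Subtype.val : ↥I → S) ⁻¹' Iio a = univ := by
        apply eq_univ_of_forall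
        intro i
        by_contra hle
        exact hne ⟨i.1, i.2, not_lt.1 hle⟩
      rw [this]; exact isOpen_univ


lemma aux_embedding (I : Set S) (h : @Continuous ↥I S (Preorder.topology ↥I) _ Subtype.val) :
    @IsEmbedding ↥I S (Preorder.topology ↥I) _ Subtype.val := by
  letI : TopologicalSpace ↥I := Preorder.topology ↥I
  exact ⟨⟨le_antisymm (continuous_iff_le_induced.1 h) (aux_induced_le I)⟩, Subtype.val_injective⟩

lemma aux_cac (I : Set S) (h : @Continuous ↥I S (Preorder.topology ↥I) _ Subtype.val) :
    IsClosed I ∨ AlmostClosedIn I := by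
  letI : TopologicalSpace ↥I := Preorder.topology ↥I
  haveI : OrderTopology ↥I := ⟨rfl⟩
  by_cases hcl : IsClosed I
  · exact Or.inl hcl
  right
  have hne : (closure I \ I).Nonempty :=
    diff_nonempty.2 fun hsub => hcl (closure_subset_iff_isClosed.1 hsub)
  have stepA : ∀ x ∈ closure I \ I, ∀ i ∈ I, i < x := by
    rintro x ⟨hxc, hxI⟩ i hi
    by_contra hge
    have hxi : x < i := lt_of_le_of_ne (not_lt.1 hge) fun e => hxI (e ▸ hi)
    obtain ⟨m, hm, hmin⟩ := aux_exists_least (A := I ∩ Ioi x) ⟨i, hi, hxi⟩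
    have hxm : x < m := hm.2
    have hV : IsOpen ((Subtype.val : ↥I → S) ⁻¹' Ioi x) := isOpen_Ioi.preimage h
    have hmV : (⟨m, hm.1⟩ : ↥I) ∈ (Subtype.val : ↥I → S) ⁻¹' Ioi x := hm.2
    obtain ⟨i₁, hio₁, hiI₁⟩ := mem_closure_iff.1 hxc (Iio m) isOpen_Iio hxm
    have hi₁x : i₁ < x := by
      rcases lt_trichotomy i₁ x with h' | h' | h'
      · exact h'
      · exact absurd (h' ▸ hiI₁) hxI
      · exact absurd (hmin i₁ ⟨hiI₁, h'⟩) (not_le.2 hio₁)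
    obtain ⟨l, hl, hIoc⟩ := exists_Ioc_subset_of_mem_nhds (hV.mem_nhds hmV)
      ⟨⟨i₁, hiI₁⟩, Subtype.coe_lt_coe.1 hio₁⟩
    have hlx : (l : S) < x := by
      rcases lt_trichotomy (l : S) x with h' | h' | h'
      · exact h'
      · exact absurd (h' ▸ l.2) hxI
      · exact absurd (hmin l.1 ⟨l.2, h'⟩) (not_le.2 (Subtype.coe_lt_coe.2 hl))
    obtain ⟨i₂, hio₂, hiI₂⟩ := mem_closure_iff.1 hxc (Ioo (l : S) (m : S)) isOpen_Ioo ⟨hlx, hxm⟩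
    have h1 : i₂ ≤ x := by
      by_contra hgt
      exact absurd (hmin i₂ ⟨hiI₂, lt_of_not_ge hgt⟩) (not_le.2 hio₂.2)
    have h2' : (⟨i₂, hiI₂⟩ : ↥I) ∈ (Subtype.val : ↥I → S) ⁻¹' Ioi x :=
      hIoc ⟨Subtype.coe_lt_coe.1 hio₂.1, Subtype.coe_le_coe.1 hio₂.2.le⟩
    have h2 : x < i₂ := h2'
    exact absurd h2 (not_lt.2 h1)
  obtain ⟨ℓ, hℓmem⟩ := hne
  have huniq : ∀ x ∈ closure I \ I, x = ℓ := by
    rintro x hx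
    by_contra hne'
    rcases lt_or_gt_of_ne hne' with h' | h'
    · obtain ⟨j, hjo, hjI⟩ := mem_closure_iff.1 hℓmem.1 (Ioi x) isOpen_Ioi h'
      exact absurd (stepA x hx j hjI) (not_lt.2 hjo.le)
    · obtain ⟨j, hjo, hjI⟩ := mem_closure_iff.1 hx.1 (Ioi ℓ) isOpen_Ioi h'
      exact absurd (stepA ℓ hℓmem j hjI) (not_lt.2 hjo.le)
  refine ⟨ℓ, ?_, fun i hi => stepA ℓ hℓmem i hi, ?_⟩
  · ext x
    exact ⟨fun hx => huniq x hx, fun hx => hx ▸ hℓmem⟩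
  · intro s hs
    by_contra hlt
    obtain ⟨j, hjo, hjI⟩ := mem_closure_iff.1 hℓmem.1 (Ioi s) isOpen_Ioi (lt_of_not_ge hlt)
    exact absurd (hs j hjI) (not_lt.2 hjo.le)

end Aux

-- STATEMENT 0
theorem stmt0 {S : Type u} [LinearOrder S] [WellFoundedLT S] [TopologicalSpace S]
    [OrderTopology S] (I : Set S) :
    List.TFAE
      [@Continuous ↥I S (Preorder.topology ↥I) _ Subtype.val,
       @IsEmbedding ↥I S (Preorder.topology ↥I) _ Subtype.val,
       IsClosed I ∨ AlmostClosedIn I] := by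
  tfae_have 2 → 1 := fun h2 => by
    letI : TopologicalSpace ↥I := Preorder.topology ↥I
    exact h2.continuous
  tfae_have 1 → 3 := aux_cac I
  tfae_have 3 → 2 := fun h3 => aux_embedding I (aux_cont I h3)
  tfae_finish
end

section
/- Suppose S is a well-ordered space and I ⊆ S is almost closed in S, with cl(I) = I ∪ {ℓ} (closure taken in S, given the subspace topology). Let (I,<<) denote I with the order topology of its inherited order, and let I ∪ {∞_I} denote the one-point (Alexandroff) compactification of (I,<<). Then (I,<<) is non-compact, and the map h : I ∪ {∞_I} → cl(I) defined by h(i) = i for i ∈ I and h(∞_I) = ℓ is a homeomorphism. -/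
open Set Topology TopologicalSpace

universe u v w

-- STATEMENT 1
theorem stmt1 {S : Type u} [LinearOrder S] [WellFoundedLT S] [TopologicalSpace S]
    [OrderTopology S] (I : Set S) (ℓ : S) (h1 : closure I \ I = {ℓ})
    (h2 : IsLeast {s : S | ∀ i ∈ I, i < s} ℓ) :
    letI tI : TopologicalSpace ↥I := Preorder.topology ↥I
    ¬ CompactSpace ↥I ∧
      ∃ h : Homeomorph (OnePoint ↥I) ↥(closure I),
        (∀ i : ↥I, ((h.toEquiv (OnePoint.some i) : ↥(closure I)) : S) = (i : S)) ∧
          ((h.toEquiv OnePoint.infty : ↥(closure I)) : S) = ℓ := by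
  letI tI : TopologicalSpace ↥I := Preorder.topology ↥I
  haveI hOT : OrderTopology ↥I := ⟨rfl⟩
  have hℓcl : ℓ ∈ closure I := by
    have : ℓ ∈ closure I \ I := h1 ▸ mem_singleton ℓ
    exact this.1
  have hℓI : ℓ ∉ I := by
    have : ℓ ∈ closure I \ I := h1 ▸ mem_singleton ℓ
    exact this.2
  have hlt : ∀ i ∈ I, i < ℓ := h2.1
  have honly : ∀ x ∈ closure I, x ∉ I → x = ℓ := fun x hx hxI =>
    (h1 ▸ (mem_diff x).mpr ⟨hx, hxI⟩ : x ∈ ({ℓ} : Set S))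
  have hne : I.Nonempty := by
    rcases eq_empty_or_nonempty I with h | h
    · exfalso
      rw [h, closure_empty, diff_empty] at h1
      exact (h1 ▸ mem_singleton ℓ : ℓ ∈ (∅ : Set S))
    · exact h
  -- least upper bound of a bounded (below ℓ) subset of I lies in I
  have hLUB : ∀ T : Set S, T ⊆ I → T.Nonempty → ∀ u ∈ upperBounds T, u < ℓ →
      ∃ s ∈ I, IsLUB T s := by
    intro T hTI hTne u hu huℓ
    have hB : (upperBounds T).Nonempty := ⟨u, hu⟩
    set s := wellFounded_lt.min (upperBounds T) hB with hs
    have hsl : IsLUB T s :=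
      ⟨wellFounded_lt.min_mem _ hB, fun v hv => not_lt.1 (wellFounded_lt.not_lt_min _ hv)⟩
    have hsu : s ≤ u := hsl.2 hu
    refine ⟨s, ?_, hsl⟩
    by_contra hsI
    have : s ∈ closure I := closure_mono hTI (hsl.mem_closure hTne)
    have hsltℓ : s < ℓ := lt_of_le_of_lt hsu huℓ
    rw [honly s this hsI] at hsltℓ
    exact lt_irrefl _ hsltℓ
  -- lower approximation inside I
  have hLower : ∀ i ∈ I, ∀ a, a < i → (∃ x ∈ I, x < i) →
      ∃ a' ∈ I, a' < i ∧ ∀ j ∈ I, a' < j → a < j := by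
    intro i hi a hai ⟨x, hxI, hxi⟩
    set T : Set S := {x ∈ I | x < i} with hT
    have hTne : T.Nonempty := ⟨x, hxI, hxi⟩
    have hub : i ∈ upperBounds T := fun t ht => le_of_lt ht.2
    obtain ⟨s, hsI, hsl⟩ := hLUB T (fun t ht => ht.1) hTne i hub (hlt i hi)
    have hsi : s ≤ i := hsl.2 hub
    rcases lt_or_eq_of_le hsi with hsi | hsi
    · -- s is a maximum of T
      refine ⟨s, hsI, hsi, fun j hjI hsj => ?_⟩
      have : ¬ j < i := fun hji => absurd (hsl.1 ⟨hjI, hji⟩) (not_le.2 hsj)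
      exact lt_of_lt_of_le hai (not_lt.1 this)
    · -- s = i : a is not an upper bound of T
      have hnub : a ∉ upperBounds T := fun ha => absurd (hsl.2 ha) (not_le.2 (hsi ▸ hai))
      rw [mem_upperBounds] at hnub
      push_neg at hnub
      obtain ⟨a', ha'T, ha'a⟩ := hnub
      exact ⟨a', ha'T.1, ha'T.2, fun j hjI ha'j => lt_trans ha'a ha'j⟩
  -- upper approximation
  have hUpper : ∀ i ∈ I, (∃ x ∈ I, i < x) →
      ∃ b' ∈ I, i < b' ∧ ∀ j ∈ I, j < b' → j ≤ i := by
    intro i hi hx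
    have hTne : {x ∈ I | i < x}.Nonempty := by
      obtain ⟨x, hxI, hix⟩ := hx; exact ⟨x, hxI, hix⟩
    set b' := wellFounded_lt.min {x ∈ I | i < x} hTne with hb'
    have hmem := wellFounded_lt.min_mem {x ∈ I | i < x} hTne
    refine ⟨b', hmem.1, hmem.2, fun j hjI hjb => ?_⟩
    by_contra hji
    exact wellFounded_lt.not_lt_min {x ∈ I | i < x} ⟨hjI, not_le.1 hji⟩ hjb
  -- continuity of the inclusion (order topology on I → S)
  have hcoe : Continuous (fun i : ↥I => (i : S)) := by
    rw [OrderTopology.topology_eq_generate_intervals (α := S)]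
    refine continuous_generateFrom_iff.mpr ?_
    rintro s ⟨a, rfl | rfl⟩
    · -- Ioi a
      rw [isOpen_iff_forall_mem_open]
      intro i hi
      simp only [mem_preimage, mem_Ioi] at hi
      by_cases hbelow : ∃ x ∈ I, x < (i : S)
      · obtain ⟨a', ha'I, ha'i, ha'⟩ := hLower i i.2 a hi hbelow
        refine ⟨Ioi (⟨a', ha'I⟩ : ↥I), fun j hj => ?_, isOpen_Ioi, ha'i⟩
        exact ha' j j.2 (Subtype.coe_lt_coe.2 hj)
      · push_neg at hbelow
        by_cases habove : ∃ x ∈ I, (i : S) < x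
        · obtain ⟨b', hb'I, hib', hb'⟩ := hUpper i i.2 habove
          refine ⟨Iio (⟨b', hb'I⟩ : ↥I), fun j hj => ?_, isOpen_Iio, hib'⟩
          have h1 : (j : S) ≤ i := hb' j j.2 (Subtype.coe_lt_coe.2 hj)
          have h2 : (i : S) ≤ j := hbelow j j.2
          simpa [le_antisymm h1 h2] using hi
        · push_neg at habove
          refine ⟨univ, fun j _ => ?_, isOpen_univ, mem_univ _⟩
          have := le_antisymm (habove j j.2) (hbelow j j.2)
          simpa [← this] using hi
    · -- Iio a
      rw [isOpen_iff_forall_mem_open]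
      intro i hi
      simp only [mem_preimage, mem_Iio] at hi
      by_cases habove : ∃ x ∈ I, (i : S) < x
      · obtain ⟨b', hb'I, hib', hb'⟩ := hUpper i i.2 habove
        refine ⟨Iio (⟨b', hb'I⟩ : ↥I), fun j hj => ?_, isOpen_Iio, hib'⟩
        exact lt_of_le_of_lt (hb' j j.2 (Subtype.coe_lt_coe.2 hj)) hi
      · push_neg at habove
        exact ⟨univ, fun j _ => lt_of_le_of_lt (habove j j.2) hi, isOpen_univ, mem_univ _⟩
  -- noncompactness
  have hncomp : ¬ CompactSpace ↥I := by
    intro hc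
    have hcic : IsCompact (range (fun i : ↥I => (i : S))) := isCompact_range hcoe
    rw [Subtype.range_coe] at hcic
    exact hℓI (hcic.isClosed.closure_eq ▸ hℓcl)
  classical
  -- the equivalence
  let e : OnePoint ↥I ≃ ↥(closure I) :=
    { toFun := fun x => Option.elim x ⟨ℓ, hℓcl⟩ (fun i => ⟨i, subset_closure i.2⟩)
      invFun := fun x => if h : (x : S) ∈ I then OnePoint.some ⟨x, h⟩ else OnePoint.infty
      left_inv := by
        rintro (_ | i)
        · exact dif_neg hℓI
        · exact dif_pos i.2
      right_inv := by
        rintro ⟨x, hx⟩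
        dsimp only
        by_cases hxI : x ∈ I
        · rw [dif_pos hxI]
          rfl
        · rw [dif_neg hxI]
          exact Subtype.ext (honly x hx hxI).symm }
  have hecont : Continuous e := by
    rw [OnePoint.continuous_iff]
    constructor
    · show Filter.Tendsto (fun i : ↥I => e (OnePoint.some i)) (Filter.coclosedCompact ↥I) (𝓝 (e OnePoint.infty))
      have : (fun i : ↥I => e (OnePoint.some i)) =
          fun i : ↥I => (⟨(i : S), subset_closure i.2⟩ : ↥(closure I)) := rfl
      rw [this, show e OnePoint.infty = ⟨ℓ, hℓcl⟩ from rfl, tendsto_subtype_rng]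
      rw [tendsto_order]
      constructor
      · intro a ha
        rw [Filter.eventually_iff, Filter.hasBasis_coclosedCompact.mem_iff]
        have hcc : IsClosed {i : ↥I | (i : S) ≤ a} ∧ IsCompact {i : ↥I | (i : S) ≤ a} := by
          rcases eq_empty_or_nonempty {i : ↥I | (i : S) ≤ a} with hE | ⟨i₀, hi₀⟩
          · rw [hE]; exact ⟨isClosed_empty, isCompact_empty⟩
          · have hUBa : a ∈ upperBounds {x ∈ I | x ≤ a} := fun t ht => ht.2
            obtain ⟨s, hsI, hsl⟩ :=
              hLUB {x ∈ I | x ≤ a} (fun t ht => ht.1) ⟨i₀, i₀.2, hi₀⟩ a hUBa ha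
            have hsa : s ≤ a := hsl.2 hUBa
            have hEq : {i : ↥I | (i : S) ≤ a} = Iic (⟨s, hsI⟩ : ↥I) := by
              ext i
              constructor
              · intro h; exact hsl.1 ⟨i.2, h⟩
              · intro h; exact le_trans h hsa
            rw [hEq]
            refine ⟨isClosed_Iic, ?_⟩
            letI : OrderBot ↥I :=
              { bot := ⟨wellFounded_lt.min I hne, wellFounded_lt.min_mem I hne⟩
                bot_le := fun x => not_lt.1 (wellFounded_lt.not_lt_min I x.2) }
            letI : ConditionallyCompleteLinearOrderBot ↥I :=
              WellFoundedLT.conditionallyCompleteLinearOrderBot ↥I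
            haveI : OrderTopology ↥I := ⟨rfl⟩
            rw [← Icc_bot]
            exact isCompact_Icc
        exact ⟨{i : ↥I | (i : S) ≤ a}, hcc, fun i hi => not_le.1 hi⟩
      · intro b hb
        exact Filter.Eventually.of_forall (fun i => lt_trans (hlt i i.2) hb)
    · show Continuous (fun i : ↥I => e (OnePoint.some i))
      exact Continuous.subtype_mk hcoe _
  haveI : T2Space ↥(closure I) := inferInstance
  let h := hecont.homeoOfEquivCompactToT2
  exact ⟨hncomp, h, fun i => rfl, rfl⟩
end

section
/- Fix a non-compact well-ordered space J and a topological space X. A subset A ⊆ X is J-closed if and only if for every I ⊆ J almost closed in J ∪ {∞_J} and every continuous map f : I ∪ {∞_I} → X, the preimage f⁻¹(A) is closed in I ∪ {∞_I}. -/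
open Set Topology TopologicalSpace

universe u v w

instance withTopOT {α : Type*} [Preorder α] : OrderTopology (WithTop α) := ⟨rfl⟩

lemma exists_isLeast' {α : Type*} [LinearOrder α] [WellFoundedLT α] {s : Set α} (hs : s.Nonempty) :
    ∃ a, IsLeast s a := by
  obtain ⟨a, ha, hmin⟩ := (IsWellFounded.wf (r := (· < ·))).has_min s hs
  exact ⟨a, ha, fun b hb => not_lt.1 (hmin b hb)⟩

lemma isOpen_of_isLowerSet' {α : Type*} [LinearOrder α] [WellFoundedLT α] [TopologicalSpace α]
    [OrderTopology α] {L : Set α} (hL : IsLowerSet L) : IsOpen L := by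
  rcases eq_empty_or_nonempty Lᶜ with h | h
  · have : L = univ := by rwa [compl_empty_iff] at h
    rw [this]; exact isOpen_univ
  · obtain ⟨m, hm, hlb⟩ := exists_isLeast' h
    have : L = Iio m := by
      ext z
      constructor
      · intro hz
        by_contra h'
        exact hm (hL (not_lt.1 h') hz)
      · intro hz
        by_contra h'
        exact absurd (hlb h') (not_le.2 hz)
    rw [this]; exact isOpen_Iio

lemma mem_closure_inter_Iio' {α : Type*} [LinearOrder α] [WellFoundedLT α] [TopologicalSpace α]
    [OrderTopology α] {B : Set α} {x : α} (hx : x ∈ closure B) (hx' : x ∉ B) :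
    x ∈ closure (B ∩ Iio x) := by
  rw [mem_closure_iff] at hx ⊢
  intro U hU hxU
  rcases eq_empty_or_nonempty (Ioi x) with h | h
  · obtain ⟨b, hbU, hbB⟩ := hx U hU hxU
    refine ⟨b, hbU, hbB, ?_⟩
    rcases lt_trichotomy b x with h1 | h1 | h1
    · exact h1
    · exact absurd (h1 ▸ hbB) hx'
    · exact absurd (mem_Ioi.2 h1) (h ▸ notMem_empty b)
  · obtain ⟨s, hs, hsl⟩ := exists_isLeast' h
    obtain ⟨b, ⟨hbU, hbs⟩, hbB⟩ := hx (U ∩ Iio s) (hU.inter isOpen_Iio) ⟨hxU, hs⟩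
    refine ⟨b, hbU, hbB, ?_⟩
    rcases lt_trichotomy b x with h1 | h1 | h1
    · exact h1
    · exact absurd (h1 ▸ hbB) hx'
    · exact absurd hbs (not_lt.2 (hsl (mem_Ioi.2 h1)))

lemma exists_between_of_mem_closure' {α : Type*} [LinearOrder α] [TopologicalSpace α]
    [OrderTopology α] {S : Set α} {x a : α} (hx : x ∈ closure S) (ha : a < x) :
    ∃ p ∈ S, a < p := by
  rw [mem_closure_iff] at hx
  obtain ⟨p, hp1, hp2⟩ := hx (Ioi a) isOpen_Ioi ha
  exact ⟨p, hp2, hp1⟩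
section Machine
variable {J : Type v} [LinearOrder J] [WellFoundedLT J] {X : Type u} [TopologicalSpace X]

lemma machine {A : Set X} (hA : JClosedSet J X A) {I I' : Set J} (hI' : AlmostClosed I')
    {f : WithTop ↥I → X} (hf : Continuous f) {x : WithTop ↥I}
    (hxmem : x ∈ closure (f ⁻¹' A)) (hxnot : x ∉ f ⁻¹' A)
    (hxmin : ∀ y ∈ closure (f ⁻¹' A), y ∉ f ⁻¹' A → x ≤ y)
    (e : WithTop ↥I' → WithTop ↥I) (he_mono : StrictMono e) (he_top : e ⊤ = x)
    (he_lt : ∀ z : ↥I', e (WithTop.some z) < x)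
    (he_seg : ∀ z w, w < e z → ∃ z', z' < z ∧ e z' = w) : False := by
  set B : Set (WithTop ↥I) := f ⁻¹' A with hB
  set C : Set (WithTop ↥I) := closure B ∩ Iic x with hCdef
  have hC_closed : IsClosed C := isClosed_closure.inter isClosed_Iic
  have hxC : x ∈ C := ⟨hxmem, le_refl x⟩
  have hCB : ∀ y ∈ C, y < x → y ∈ B := by
    intro y hy hyx
    by_contra h'
    exact absurd (hxmin y hy.1 h') (not_le.2 hyx)
  have hs1 : x ∈ closure (B ∩ Iio x) := mem_closure_inter_Iio' hxmem hxnot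
  have he_le : ∀ z, e z ≤ x := by
    intro z
    induction z using WithTop.recTopCoe with
    | top => exact he_top.le
    | coe w => exact (he_lt w).le
  -- define h
  have hex : ∀ z : WithTop ↥I', (C ∩ Ici (e z)).Nonempty := fun z => ⟨x, hxC, he_le z⟩
  choose h hP using fun z => exists_isLeast' (hex z)
  have hmono : Monotone h := by
    intro z z' hzz'
    exact (hP z).2 ⟨(hP z').1.1, le_trans (he_mono.monotone hzz') (hP z').1.2⟩
  have hTop : h ⊤ = x := le_antisymm ((hP ⊤).1.1.2) (he_top ▸ (hP ⊤).1.2)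
  have hsome : ∀ w : ↥I', h (WithTop.some w) ∈ B := by
    intro w
    obtain ⟨p, hp, hap⟩ := exists_between_of_mem_closure' hs1 (he_lt w)
    have hple : h (WithTop.some w) ≤ p :=
      (hP _).2 ⟨⟨subset_closure hp.1, mem_Iic.2 hp.2.le⟩, mem_Ici.2 hap.le⟩
    exact hCB _ (hP _).1.1 (lt_of_le_of_lt hple hp.2)
  -- continuity of h
  have hcont : Continuous h := by
    refine continuous_generateFrom_iff.2 ?_
    rintro s ⟨a, rfl | rfl⟩
    · -- preimage of Ioi a
      have hupper : ∀ z z', z ≤ z' → a < h z → a < h z' :=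
        fun z z' hzz' ha => lt_of_lt_of_le ha (hmono hzz')
      rcases eq_empty_or_nonempty (h ⁻¹' {b | a < b}) with hU | hU
      · rw [show h ⁻¹' Ioi a = ∅ from hU]; exact isOpen_empty
      · obtain ⟨m, hmU, hmlb⟩ := exists_isLeast' hU
        have hUeq : h ⁻¹' {b | a < b} = Ici m := by
          ext z
          constructor
          · intro hz; exact hmlb hz
          · intro hz; exact hupper m z hz hmU
        rw [show h ⁻¹' Ioi a = Ici m from hUeq]
        have hzle : ∀ z, z < m → h z ≤ a := by
          intro z hz
          by_contra ha
          exact absurd (hmlb (not_le.1 ha : a < h z)) (not_le.2 hz)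
        by_cases hbot : ∃ c, c < m
        · by_cases hlim : ∀ c < m, ∃ z, c < z ∧ z < m
          · exfalso
            by_cases hcase : ∃ z, z < m ∧ e m ≤ h z
            · obtain ⟨z, hzm, hze⟩ := hcase
              have hle : h m ≤ h z := (hP m).2 ⟨(hP z).1.1, hze⟩
              exact absurd hmU (not_lt.2 (hle.trans (hzle z hzm)))
            · push_neg at hcase
              set D : Set (WithTop ↥I) := {w | w ∈ C ∧ w < e m} with hD
              obtain ⟨c0, hc0⟩ := hbot
              obtain ⟨z0, hz01, hz02⟩ := hlim c0 hc0
              have hDne : D.Nonempty := ⟨h z0, (hP z0).1.1, hcase z0 hz02⟩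
              have hlub : IsLUB D (e m) := by
                constructor
                · intro w hw; exact hw.2.le
                · intro u hu
                  by_contra hu'
                  obtain ⟨z', hz'm, hez'⟩ := he_seg m u (not_le.1 hu')
                  obtain ⟨z, hz1, hz2⟩ := hlim z' hz'm
                  have h1 : u < e z := hez' ▸ he_mono hz1
                  have h2 : h z ∈ D := ⟨(hP z).1.1, hcase z hz2⟩
                  exact absurd (hu h2) (not_le.2 (lt_of_lt_of_le h1 (hP z).1.2))
              have hemC : e m ∈ C :=
                hC_closed.closure_subset
                  (closure_mono (fun w hw => hw.1) (hlub.mem_closure hDne))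
              have hhm : h m ≤ e m := (hP m).2 ⟨hemC, mem_Ici.2 le_rfl⟩
              have hem_le_a : e m ≤ a := by
                by_contra h'
                obtain ⟨z', hz'm, hez'⟩ := he_seg m a (not_le.1 h')
                obtain ⟨z, hz1, hz2⟩ := hlim z' hz'm
                have : a < e z := hez' ▸ he_mono hz1
                exact absurd (hzle z hz2) (not_le.2 (this.trans_le (hP z).1.2))
              exact absurd hmU (not_lt.2 (hhm.trans hem_le_a))
          · push_neg at hlim
            obtain ⟨c, hc, hgap⟩ := hlim
            have : Ici m = Ioi c := by
              ext z
              constructor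
              · intro hz; exact lt_of_lt_of_le hc hz
              · intro hz
                by_contra h'
                exact absurd (hgap z hz) (not_le.2 (not_le.1 h'))
            rw [this]; exact isOpen_Ioi
        · have : Ici m = univ := eq_univ_of_forall fun z => not_lt.1 fun h' => hbot ⟨z, h'⟩
          rw [this]; exact isOpen_univ
    · -- preimage of Iio a : lower set
      exact isOpen_of_isLowerSet' (fun z' z hzz' hz => lt_of_le_of_lt (hmono hzz') hz)
  have hmem := hA I' hI' (f ∘ h) (hf.comp hcont) (fun w => hsome w)
  rw [Function.comp_apply, hTop] at hmem
  exact hxnot hmem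

end Machine
section Key
variable {J : Type v} [LinearOrder J] [WellFoundedLT J] {X : Type u} [TopologicalSpace X]

lemma key {A : Set X} (hA : JClosedSet J X A) (I : Set J) (hI : AlmostClosed I)
    (f : WithTop ↥I → X) (hf : Continuous f) : IsClosed (f ⁻¹' A) := by
  by_contra hB
  set B : Set (WithTop ↥I) := f ⁻¹' A with hBdef
  have hne : (closure B \ B).Nonempty := by
    rw [nonempty_iff_ne_empty]
    intro h
    exact hB (isClosed_of_closure_subset (diff_eq_empty.mp h))
  obtain ⟨x, hx, hxlb⟩ := exists_isLeast' hne
  have hxmin : ∀ y ∈ closure B, y ∉ B → x ≤ y := fun y h1 h2 => hxlb ⟨h1, h2⟩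
  induction x using WithTop.recTopCoe with
  | top =>
    exact machine hA hI hf hx.1 hx.2 hxmin id strictMono_id rfl
      (fun z => WithTop.coe_lt_top z) (fun z w hw => ⟨w, hw, rfl⟩)
  | coe i =>
    set x : WithTop ↥I := WithTop.some i with hxdef
    set j₀ : J := i.1 with hj₀def
    set I' : Set J := {j | j ∈ I ∧ j < j₀} with hI'def
    -- basic facts about I'
    have hs1 : x ∈ closure (B ∩ Iio x) := mem_closure_inter_Iio' hx.1 hx.2
    have hIio : ∀ p : WithTop ↥I, p < x → ∃ w : ↥I, p = WithTop.some w ∧ w.1 ∈ I' := by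
      intro p hp
      induction p using WithTop.recTopCoe with
      | top => exact absurd hp (by simp)
      | coe w =>
        refine ⟨w, rfl, w.2, ?_⟩
        exact Subtype.coe_lt_coe.2 (WithTop.coe_lt_coe.1 hp)
    have hne' : I'.Nonempty := by
      have : (B ∩ Iio x).Nonempty := by
        rw [nonempty_iff_ne_empty]
        intro h
        rw [h, closure_empty] at hs1
        exact hs1
      obtain ⟨p, _, hp2⟩ := this
      obtain ⟨w, _, hw2⟩ := hIio p hp2
      exact ⟨w.1, hw2⟩
    have hnomax : ∀ j ∈ I', ∃ j' ∈ I', j < j' := by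
      intro j hj
      obtain ⟨p, hp, hap⟩ :=
        exists_between_of_mem_closure' hs1
          (show WithTop.some (⟨j, hj.1⟩ : ↥I) < x from WithTop.coe_lt_coe.2 (Subtype.mk_lt_mk.2 hj.2))
      obtain ⟨w, hw1, hw2⟩ := hIio p hp.2
      refine ⟨w.1, hw2, ?_⟩
      rw [hw1] at hap
      exact Subtype.coe_lt_coe.2 (WithTop.coe_lt_coe.1 hap)
    -- almost closedness of I'
    have hAC : AlmostClosed I' := by
      obtain ⟨ℓ, hℓeq, hℓleast⟩ := hI
      set S' : Set (WithTop J) := (fun j : J => (j : WithTop J)) '' I' with hS'def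
      set SI : Set (WithTop J) := (fun j : J => (j : WithTop J)) '' I with hSIdef
      have hubj₀ : (j₀ : WithTop J) ∈ upperBounds S' := by
        rintro w ⟨j, hj, rfl⟩
        exact WithTop.coe_le_coe.2 hj.2.le
      obtain ⟨σ, hσmem, hσlb⟩ := exists_isLeast' ⟨(j₀ : WithTop J), hubj₀⟩
      have hσlub : IsLUB S' σ := ⟨hσmem, hσlb⟩
      have hσle : σ ≤ (j₀ : WithTop J) := hσlb hubj₀
      have hσnot : σ ∉ S' := by
        rintro ⟨j, hj, hjσ⟩
        obtain ⟨j', hj', hjj'⟩ := hnomax j hj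
        have : (j' : WithTop J) ≤ σ := hσmem ⟨j', hj', rfl⟩
        rw [← hjσ] at this
        exact absurd (WithTop.coe_le_coe.1 this) (not_le.2 hjj')
      obtain ⟨j1, hj1⟩ := hne'
      have hS'ne : S'.Nonempty := ⟨(j1 : WithTop J), j1, hj1, rfl⟩
      have hσcl : σ ∈ closure S' := hσlub.mem_closure hS'ne
      have hσclSI : σ ∈ closure SI :=
        closure_mono (image_mono (fun j hj => hj.1)) hσcl
      have hj₀ℓ : (j₀ : WithTop J) < ℓ := hℓleast.1 ((j₀ : WithTop J)) ⟨j₀, i.2, rfl⟩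
      have hσeq : σ = (j₀ : WithTop J) := by
        by_cases hσSI : σ ∈ SI
        · obtain ⟨j, hj, hjσ⟩ := hσSI
          have hjle : j ≤ j₀ := by
            rw [← hjσ] at hσle
            exact WithTop.coe_le_coe.1 hσle
          rcases lt_or_eq_of_le hjle with h' | h'
          · exact absurd ⟨j, ⟨hj, h'⟩, hjσ⟩ hσnot
          · rw [← hjσ, h']
        · have : σ ∈ closure SI \ SI := ⟨hσclSI, hσSI⟩
          rw [hℓeq] at this
          rw [this] at hσle
          exact absurd hj₀ℓ (not_lt.2 hσle)
      refine ⟨(j₀ : WithTop J), ?_, ?_⟩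
      · apply Subset.antisymm
        · rintro y ⟨hy1, hy2⟩
          have hyle : y ≤ (j₀ : WithTop J) :=
            closure_minimal (fun w hw => hubj₀ hw) isClosed_Iic hy1
          rcases lt_or_eq_of_le hyle with h' | h'
          · exfalso
            have hyclSI : y ∈ closure SI :=
              closure_mono (image_mono (fun j hj => hj.1)) hy1
            by_cases hySI : y ∈ SI
            · obtain ⟨j, hj, hjy⟩ := hySI
              have hjlt : j < j₀ := by
                rw [← hjy] at h'
                exact WithTop.coe_lt_coe.1 h'
              exact hy2 ⟨j, ⟨hj, hjlt⟩, hjy⟩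
            · have : y ∈ closure SI \ SI := ⟨hyclSI, hySI⟩
              rw [hℓeq] at this
              rw [this] at h'
              exact absurd hj₀ℓ (not_lt.2 h'.le)
          · exact h'
        · rintro y rfl
          exact ⟨hσeq ▸ hσcl, fun h => hσnot (hσeq ▸ h)⟩
      · constructor
        · rintro w ⟨j, hj, rfl⟩
          exact WithTop.coe_lt_coe.2 hj.2
        · intro u hu
          exact hσeq ▸ hσlb (fun w hw => (hu w hw).le)
    -- the embedding e
    set e : WithTop ↥I' → WithTop ↥I :=
      fun z => WithTop.recTopCoe x (fun w => WithTop.some (⟨w.1, w.2.1⟩ : ↥I)) z with hedef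
    have he_coe : ∀ w : ↥I', e (WithTop.some w) = WithTop.some (⟨w.1, w.2.1⟩ : ↥I) := fun w => rfl
    have he_top : e ⊤ = x := rfl
    have he_lt : ∀ w : ↥I', e (WithTop.some w) < x := by
      intro w
      rw [he_coe]
      exact WithTop.coe_lt_coe.2 (Subtype.mk_lt_mk.2 w.2.2)
    have he_mono : StrictMono e := by
      intro z z' hzz'
      induction z' using WithTop.recTopCoe with
      | top =>
        induction z using WithTop.recTopCoe with
        | top => exact absurd hzz' (lt_irrefl _)
        | coe w => exact he_lt w
      | coe w' =>
        induction z using WithTop.recTopCoe with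
        | top => exact absurd hzz' (by simp)
        | coe w =>
          rw [he_coe, he_coe]
          exact WithTop.coe_lt_coe.2 (Subtype.mk_lt_mk.2 (Subtype.coe_lt_coe.2 (WithTop.coe_lt_coe.1 hzz')))
    have he_seg : ∀ z w, w < e z → ∃ z', z' < z ∧ e z' = w := by
      intro z w hw
      induction z using WithTop.recTopCoe with
      | top =>
        rw [he_top] at hw
        obtain ⟨v, hv1, hv2⟩ := hIio w hw
        exact ⟨WithTop.some (⟨v.1, hv2⟩ : ↥I'), WithTop.coe_lt_top _, by rw [he_coe, hv1]⟩
      | coe u =>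
        rw [he_coe] at hw
        have hwx : w < x :=
          lt_trans hw (WithTop.coe_lt_coe.2 (Subtype.mk_lt_mk.2 u.2.2))
        obtain ⟨v, hv1, hv2⟩ := hIio w hwx
        have hvu : v.1 < u.1 := by
          rw [hv1] at hw
          exact Subtype.coe_lt_coe.2 (WithTop.coe_lt_coe.1 hw)
        refine ⟨WithTop.some (⟨v.1, hv2⟩ : ↥I'), ?_, by rw [he_coe, hv1]⟩
        exact WithTop.coe_lt_coe.2 (Subtype.mk_lt_mk.2 hvu)
    exact machine hA hAC hf hx.1 hx.2 hxmin e he_mono he_top he_lt he_seg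

end Key

-- STATEMENT 3
theorem stmt3 {J : Type v} [LinearOrder J] [WellFoundedLT J] [TopologicalSpace J]
    [OrderTopology J] [NoncompactSpace J] {X : Type u} [TopologicalSpace X] (A : Set X) :
    JClosedSet J X A ↔
      ∀ I : Set J, AlmostClosed I → ∀ f : WithTop ↥I → X, Continuous f →
        IsClosed (f ⁻¹' A) := by
  constructor
  · intro hA I hI f hf
    exact key hA I hI f hf
  · intro H I hI f hf hmem
    have hB : IsClosed (f ⁻¹' A) := H I hI f hf
    obtain ⟨ℓ, hℓeq, hℓleast⟩ := hI
    set SI : Set (WithTop J) := (fun j : J => (j : WithTop J)) '' I with hSIdef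
    have hℓd : ℓ ∈ closure SI \ SI := by
      rw [hℓeq]; exact mem_singleton _
    have hSIne : SI.Nonempty := by
      rw [nonempty_iff_ne_empty]
      intro h
      have := hℓd.1
      rw [h, closure_empty] at this
      exact this
    have hnomax : ∀ i ∈ I, ∃ i' ∈ I, i < i' := by
      intro i hi
      have hiℓ : (i : WithTop J) < ℓ := hℓleast.1 ((i : WithTop J)) ⟨i, hi, rfl⟩
      obtain ⟨p, hp, hip⟩ := exists_between_of_mem_closure' hℓd.1 hiℓ
      obtain ⟨i', hi', rfl⟩ := hp
      exact ⟨i', hi', WithTop.coe_lt_coe.1 hip⟩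
    obtain ⟨p0, hp0⟩ := hSIne
    obtain ⟨j0, hj0, _⟩ := hp0
    have hIione : (Iio (⊤ : WithTop ↥I)).Nonempty :=
      ⟨WithTop.some (⟨j0, hj0⟩ : ↥I), WithTop.coe_lt_top _⟩
    have hlub : IsLUB (Iio (⊤ : WithTop ↥I)) ⊤ := by
      constructor
      · exact fun z _ => le_top
      · intro u hu
        by_contra h'
        have hu' : u < ⊤ := lt_top_iff_ne_top.2 (fun h => h' (h ▸ le_refl _))
        induction u using WithTop.recTopCoe with
        | top => exact absurd hu' (lt_irrefl _)
        | coe w =>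
          obtain ⟨i', hi', hwi'⟩ := hnomax w.1 w.2
          have : WithTop.some (⟨i', hi'⟩ : ↥I) ≤ WithTop.some w :=
            hu (WithTop.coe_lt_top _)
          have h2 : (⟨i', hi'⟩ : ↥I) ≤ w := WithTop.coe_le_coe.1 this
          exact absurd hwi' (not_lt.2 (Subtype.coe_le_coe.2 h2))
    have htopcl : (⊤ : WithTop ↥I) ∈ closure (Iio (⊤ : WithTop ↥I)) :=
      hlub.mem_closure hIione
    have hsub : Iio (⊤ : WithTop ↥I) ⊆ f ⁻¹' A := by
      intro z hz
      induction z using WithTop.recTopCoe with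
      | top => exact absurd (mem_Iio.1 hz) (lt_irrefl _)
      | coe w => exact hmem w
    have : (⊤ : WithTop ↥I) ∈ closure (f ⁻¹' A) := closure_mono hsub htopcl
    rw [hB.closure_eq] at this
    exact this
end

section
/- Suppose J is a non-compact well-ordered space, X is a topological space, and f : J → X is a (not necessarily continuous) function such that for every j ∈ J the fiber f⁻¹(f(j)) is bounded in J (i.e. has an upper bound in J). Then there exists a closed cofinal (unbounded) subset I ⊆ J such that the restriction f|_I is injective. In particular, if f is continuous then f|_I is continuous. -/
open Set Topology TopologicalSpace

universe u v w

-- STATEMENT 4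
theorem stmt4 {J : Type v} [LinearOrder J] [WellFoundedLT J] [TopologicalSpace J]
    [OrderTopology J] [NoncompactSpace J] {X : Type u} [TopologicalSpace X]
    (f : J → X) (hf : ∀ j : J, BddAbove (f ⁻¹' {f j})) :
    ∃ I : Set J, IsClosed I ∧ ¬ BddAbove I ∧ Set.InjOn f I ∧
      (Continuous f → Continuous (I.restrict f)) := by
  classical
  haveI : Nonempty J := by
    by_contra h
    haveI : IsEmpty J := not_nonempty_iff.mp h
    exact NoncompactSpace.noncompact_univ (X := J) isCompact_univ
  -- no maximal element
  have nomax : ∀ j : J, ∃ k, j < k := by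
    intro j
    by_contra h
    push_neg at h
    obtain ⟨b0, hb0⟩ : ∃ b0 : J, ∀ a, b0 ≤ a := by
      refine ⟨(IsWellFounded.wf (r := (· < · : J → J → Prop))).min univ univ_nonempty,
        fun a => ?_⟩
      exact not_lt.mp ((IsWellFounded.wf (r := (· < · : J → J → Prop))).not_lt_min univ
        (mem_univ a))
    letI : OrderBot J := { bot := b0, bot_le := hb0 }
    letI := WellFoundedLT.conditionallyCompleteLinearOrderBot J
    have hc : IsCompact (Icc (⊥ : J) j) := isCompact_Icc
    have : (univ : Set J) = Icc ⊥ j := by ext x; simp [bot_le, h x]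
    exact NoncompactSpace.noncompact_univ (X := J) (this ▸ hc)
  -- choose g : J → J with j < g j and fiber of f j strictly below g j
  have hg : ∀ j : J, ∃ m : J, j < m ∧ ∀ x, f x = f j → x < m := by
    intro j
    obtain ⟨u, hu⟩ := hf j
    obtain ⟨m, hm⟩ := nomax (max j u)
    refine ⟨m, lt_of_le_of_lt (le_max_left _ _) hm, fun x hx => ?_⟩
    exact lt_of_le_of_lt (le_trans (hu hx) (le_max_right _ _)) hm
  choose g hgl hgf using hg
  -- the recursive membership predicate
  let F : ∀ j : J, (∀ i, i < j → Prop) → Prop := fun j rec =>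
    (∀ i, ∀ h : i < j, rec i h → g i ≤ j) ∧
      (∀ k, k < j → ∃ i, ∃ h : i < j, rec i h ∧ k < g i)
  let mem : J → Prop := fun j =>
    (IsWellFounded.wf (r := (· < · : J → J → Prop))).fix F j
  have mem_eq : ∀ j, mem j ↔
      ((∀ i, i < j → mem i → g i ≤ j) ∧ (∀ k, k < j → ∃ i, i < j ∧ mem i ∧ k < g i)) := by
    intro j
    show (IsWellFounded.wf (r := (· < · : J → J → Prop))).fix F j ↔ _
    rw [WellFounded.fix_eq]
    constructor
    · rintro ⟨h1, h2⟩
      exact ⟨fun i hi hmi => h1 i hi hmi, fun k hk => by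
        obtain ⟨i, hi, hmi, hki⟩ := h2 k hk; exact ⟨i, hi, hmi, hki⟩⟩
    · rintro ⟨h1, h2⟩
      exact ⟨fun i hi hmi => h1 i hi hmi, fun k hk => by
        obtain ⟨i, hi, hmi, hki⟩ := h2 k hk; exact ⟨i, hi, hmi, hki⟩⟩
  set I : Set J := {j | mem j} with hI
  have memI : ∀ {j}, j ∈ I ↔
      ((∀ i, i < j → i ∈ I → g i ≤ j) ∧ (∀ k, k < j → ∃ i, i < j ∧ i ∈ I ∧ k < g i)) :=
    fun {j} => mem_eq j
  -- injectivity
  have hinj : Set.InjOn f I := by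
    intro a ha b hb hab
    rcases lt_trichotomy a b with h | h | h
    · exact absurd (hgf a b hab.symm) (not_lt.mpr ((memI.mp hb).1 a h ha))
    · exact h
    · exact absurd (hgf b a hab) (not_lt.mpr ((memI.mp ha).1 b h hb))
  -- unboundedness
  have hunb : ¬ BddAbove I := by
    rintro ⟨b, hb⟩
    -- g '' I is bounded above
    have hT : ∃ c : J, ∀ i ∈ I, g i ≤ c := by
      by_cases hmax : ∃ m ∈ I, ∀ i ∈ I, i ≤ m
      · obtain ⟨m, hm, hmax⟩ := hmax
        refine ⟨g m, fun i hi => ?_⟩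
        rcases lt_or_eq_of_le (hmax i hi) with h | h
        · exact le_of_lt (lt_of_le_of_lt ((memI.mp hm).1 i h hi) (hgl m))
        · exact le_of_eq (by rw [h])
      · push_neg at hmax
        refine ⟨b, fun i hi => ?_⟩
        obtain ⟨i', hi', hlt⟩ := hmax i hi
        exact le_trans ((memI.mp hi').1 i hlt hi) (hb hi')
    obtain ⟨c, hc⟩ := hT
    set T : Set J := {k | ∀ i ∈ I, g i ≤ k} with hTdef
    have hTne : T.Nonempty := ⟨c, hc⟩
    set j0 : J := (IsWellFounded.wf (r := (· < · : J → J → Prop))).min T hTne with hj0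
    have hj0T : j0 ∈ T := (IsWellFounded.wf (r := (· < · : J → J → Prop))).min_mem T hTne
    have hj0I : j0 ∈ I := by
      refine memI.mpr ⟨fun i _ hi => hj0T i hi, fun k hk => ?_⟩
      have hkT : k ∉ T := fun hkT =>
        (IsWellFounded.wf (r := (· < · : J → J → Prop))).not_lt_min T hkT hk
      simp only [hTdef, Set.mem_setOf_eq, not_forall] at hkT
      obtain ⟨i, hi, hki⟩ := hkT
      exact ⟨i, lt_of_lt_of_le (hgl i) (hj0T i hi), hi, not_le.mp hki⟩
    exact absurd (hj0T j0 hj0I) (not_le.mpr (hgl j0))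
  -- closedness
  have hclosed : IsClosed I := by
    rw [← isOpen_compl_iff, isOpen_iff_forall_mem_open]
    intro x hx
    rw [Set.mem_compl_iff, memI, not_and_or] at hx
    rcases hx with hx | hx
    · push_neg at hx
      obtain ⟨i, hi, hiI, hgi⟩ := hx
      refine ⟨Ioo i (g i), fun y hy hyI => ?_, isOpen_Ioo, hi, hgi⟩
      exact absurd ((memI.mp hyI).1 i hy.1 hiI) (not_le.mpr hy.2)
    · push_neg at hx
      obtain ⟨k, hk, hkall⟩ := hx
      have hxI : x ∉ I := fun hxI => by
        obtain ⟨i, hi, hiI, hki⟩ := (memI.mp hxI).2 k hk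
        exact absurd (hkall i hi hiI) (not_le.mpr hki)
      by_cases hup : (I ∩ Ioi x).Nonempty
      · set y0 : J := (IsWellFounded.wf (r := (· < · : J → J → Prop))).min _ hup with hy0
        have hy0mem : y0 ∈ I ∩ Ioi x :=
          (IsWellFounded.wf (r := (· < · : J → J → Prop))).min_mem _ hup
        refine ⟨Ioo k y0, fun y hy hyI => ?_, isOpen_Ioo, hk, hy0mem.2⟩
        rcases lt_trichotomy y x with h | h | h
        · exact absurd (hkall y h hyI) (not_le.mpr (lt_trans hy.1 (hgl y)))
        · exact hxI (h ▸ hyI)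
        · exact (IsWellFounded.wf (r := (· < · : J → J → Prop))).not_lt_min (I ∩ Ioi x)
            ⟨hyI, h⟩ hy.2
      · refine ⟨Ioi k, fun y hy hyI => ?_, isOpen_Ioi, hk⟩
        rcases lt_trichotomy y x with h | h | h
        · exact absurd (hkall y h hyI) (not_le.mpr (lt_trans hy (hgl y)))
        · exact hxI (h ▸ hyI)
        · exact hup ⟨y, hyI, h⟩
  exact ⟨I, hclosed, hunb, hinj, fun hc => hc.comp continuous_subtype_val⟩
end

section
/- Suppose K is a compact well-ordered space with minimal element 0, (M,m) ∈ K × K, and B ⊆ [0,M] × [0,m] is a subset (where [0,M] × [0,m] carries the product of the subspace topologies) such that: for all k < M, the set ([0,k] × [0,m]) ∩ B is closed in [0,M] × [0,m]; ({M} × [0,m]) ∩ B = ∅; and ([0,M] × {m}) ∩ B = ∅. If (M,m) lies in cl(B) \ B, then there exist a limit point l of [0,M] and a continuous map f : [0,l] → [0,M] × [0,m] such that f([0,l)) ⊆ B and f(l) = (M,m). -/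
open Set Topology TopologicalSpace

universe u v w

section Stmt6Aux

attribute [local instance] Classical.propDecidable

variable {K : Type u} [LinearOrder K] [WellFoundedLT K]

noncomputable def kMin (S : Set K) (h : S.Nonempty) : K := (wellFounded_lt (α := K)).min S h

lemma kMin_mem {S : Set K} {h : S.Nonempty} : kMin S h ∈ S := WellFounded.min_mem _ S h

lemma kMin_le {S : Set K} {h : S.Nonempty} {y : K} (hy : y ∈ S) : kMin S h ≤ y :=
  not_lt.1 (WellFounded.not_lt_min _ S hy)

noncomputable def kSucc (x : K) : K :=
  if h : (Ioi x).Nonempty then kMin (Ioi x) h else x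

lemma lt_kSucc {x y : K} (h : x < y) : x < kSucc x := by
  rw [kSucc, dif_pos ⟨y, h⟩]; exact kMin_mem

lemma kSucc_le {x y : K} (h : x < y) : kSucc x ≤ y := by
  rw [kSucc, dif_pos ⟨y, h⟩]; exact kMin_le h

variable [TopologicalSpace K] [OrderTopology K] [CompactSpace K] [Nonempty K]

lemma kUb_nonempty (S : Set K) : {u : K | ∀ s ∈ S, s ≤ u}.Nonempty := by
  obtain ⟨t, -, ht⟩ := (isCompact_univ : IsCompact (univ : Set K)).exists_isGreatest univ_nonempty
  exact ⟨t, fun s _ => ht (mem_univ s)⟩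

noncomputable def kLub (S : Set K) : K := kMin _ (kUb_nonempty S)

lemma kLub_le {S : Set K} {u : K} (h : ∀ s ∈ S, s ≤ u) : kLub S ≤ u := kMin_le h

lemma le_kLub {S : Set K} {s : K} (hs : s ∈ S) : s ≤ kLub S := by
  have h := kMin_mem (S := {u : K | ∀ s ∈ S, s ≤ u}) (h := kUb_nonempty S)
  exact h s hs

lemma lt_kLub {S : Set K} {u : K} (h : u < kLub S) : ∃ s ∈ S, u < s := by
  by_contra hc
  push_neg at hc
  exact absurd (kLub_le hc) (not_le.2 h)

noncomputable def muF (B : Set (K × K)) (k : K) : K :=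
  kLub {b | ∃ a, a ≤ k ∧ (a, b) ∈ B}

lemma muF_mono (B : Set (K × K)) {k k' : K} (h : k ≤ k') : muF B k ≤ muF B k' :=
  kLub_le fun b ⟨a, ha, hab⟩ => le_kLub ⟨a, ha.trans h, hab⟩

lemma muF_ub {B : Set (K × K)} {p : K × K} (hp : p ∈ B) {k : K} (h : p.1 ≤ k) :
    p.2 ≤ muF B k := le_kLub ⟨p.1, h, hp⟩

noncomputable def gfun (M m : K) (B : Set (K × K)) : K → K × K :=
  WellFounded.fix (wellFounded_lt (α := K)) (fun x rec =>
    let A := kLub {v | ∃ y, ∃ h : y < x, (rec y h).1 = v}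
    let Bv := kLub {v | ∃ y, ∃ h : y < x, (rec y h).2 = v}
    if A = M then (M, m)
    else if (∃ y, y < x) ∧ (∀ y, ∀ h : y < x, (rec y h).1 < A) then (A, Bv)
    else if h : ∃ q, q ∈ B ∧ A < q.1 ∧ q.1 < M ∧ muF B A < q.2 ∧ q.2 < m
      then h.choose else (M, m))

noncomputable def Af (M m : K) (B : Set (K × K)) (x : K) : K :=
  kLub {v | ∃ y, ∃ _h : y < x, (gfun M m B y).1 = v}

noncomputable def Bf (M m : K) (B : Set (K × K)) (x : K) : K :=
  kLub {v | ∃ y, ∃ _h : y < x, (gfun M m B y).2 = v}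

lemma gfun_eq (M m : K) (B : Set (K × K)) (x : K) :
    gfun M m B x =
      if Af M m B x = M then (M, m)
      else if (∃ y, y < x) ∧ (∀ y, ∀ _h : y < x, (gfun M m B y).1 < Af M m B x) then
        (Af M m B x, Bf M m B x)
      else if h : ∃ q, q ∈ B ∧ Af M m B x < q.1 ∧ q.1 < M ∧
          muF B (Af M m B x) < q.2 ∧ q.2 < m
        then h.choose else (M, m) := by
  conv_lhs => rw [gfun, WellFounded.fix_eq]
  rfl

variable {M m : K} {B : Set (K × K)}

lemma le_Af {x y : K} (h : y < x) : (gfun M m B y).1 ≤ Af M m B x := le_kLub ⟨y, h, rfl⟩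

lemma le_Bf {x y : K} (h : y < x) : (gfun M m B y).2 ≤ Bf M m B x := le_kLub ⟨y, h, rfl⟩

lemma lt_Af {x u : K} (h : u < Af M m B x) : ∃ y, y < x ∧ u < (gfun M m B y).1 := by
  obtain ⟨v, ⟨y, hy, rfl⟩, hv⟩ := lt_kLub h
  exact ⟨y, hy, hv⟩

lemma lt_Bf {x u : K} (h : u < Bf M m B x) : ∃ y, y < x ∧ u < (gfun M m B y).2 := by
  obtain ⟨v, ⟨y, hy, rfl⟩, hv⟩ := lt_kLub h
  exact ⟨y, hy, hv⟩

lemma Af_le {x u : K} (h : ∀ y, y < x → (gfun M m B y).1 ≤ u) : Af M m B x ≤ u :=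
  kLub_le (by rintro v ⟨y, hy, rfl⟩; exact h y hy)

lemma Bf_le {x u : K} (h : ∀ y, y < x → (gfun M m B y).2 ≤ u) : Bf M m B x ≤ u :=
  kLub_le (by rintro v ⟨y, hy, rfl⟩; exact h y hy)

def GoodPt (M m : K) (B : Set (K × K)) (x : K) : Prop :=
  gfun M m B x ∈ B ∧ ∀ y, y < x →
    (gfun M m B y).1 < (gfun M m B x).1 ∧ (gfun M m B y).2 ≤ (gfun M m B x).2

end Stmt6Aux

theorem stmt6 {K : Type u} [LinearOrder K] [WellFoundedLT K] [TopologicalSpace K]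
    [OrderTopology K] [CompactSpace K] (M m : K) (B : Set (K × K))
    (hB : B ⊆ Set.Iic M ×ˢ Set.Iic m)
    (h1 : ∀ k < M, IsClosed ((Set.Iic k ×ˢ Set.Iic m) ∩ B))
    (h2 : (({M} : Set K) ×ˢ Set.Iic m) ∩ B = ∅)
    (h3 : (Set.Iic M ×ˢ ({m} : Set K)) ∩ B = ∅)
    (h4 : (M, m) ∈ closure B \ B) :
    ∃ l : K, l ≤ M ∧ l ∈ closure (Set.Iio l) ∧
      ∃ f : ↥(Set.Iic l) → K × K, Continuous f ∧
        (∀ x : ↥(Set.Iic l), (x : K) < l → f x ∈ B) ∧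
        ∀ x : ↥(Set.Iic l), (x : K) = l → f x = (M, m) := by
  haveI : Nonempty K := ⟨M⟩
  obtain ⟨hcl, hnB⟩ := h4
  -- basic facts about B
  have memB : ∀ p ∈ B, p.1 < M ∧ p.2 < m := by
    intro p hp
    obtain ⟨hp1, hp2⟩ := hB hp
    constructor
    · refine lt_of_le_of_ne hp1 fun hEq => ?_
      have : p ∈ (({M} : Set K) ×ˢ Set.Iic m) ∩ B := ⟨⟨hEq, hp2⟩, hp⟩
      rw [h2] at this; exact this
    · refine lt_of_le_of_ne hp2 fun hEq => ?_
      have : p ∈ (Set.Iic M ×ˢ ({m} : Set K)) ∩ B := ⟨⟨hp1, hEq⟩, hp⟩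
      rw [h3] at this; exact this
  have hBne : ∃ p, p ∈ B := by
    obtain ⟨p, -, hp⟩ := mem_closure_iff.1 hcl univ isOpen_univ trivial
    exact ⟨p, hp⟩
  have hdense : ∀ k < M, ∀ u < m, ∃ p, p ∈ B ∧ k < p.1 ∧ p.1 < M ∧ u < p.2 ∧ p.2 < m := by
    intro k hk u hu
    obtain ⟨p, ⟨hp1, hp2⟩, hpB⟩ := mem_closure_iff.1 hcl (Ioi k ×ˢ Ioi u)
      (isOpen_Ioi.prod isOpen_Ioi) ⟨hk, hu⟩
    exact ⟨p, hpB, hp1, (memB p hpB).1, hp2, (memB p hpB).2⟩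
  obtain ⟨p0, hp0⟩ := hBne
  have hMlim : ∀ t < M, ∃ z, t < z ∧ z < M := by
    intro t ht
    obtain ⟨p, hpB, h1', h2', -⟩ := hdense t ht p0.2 (memB p0 hp0).2
    exact ⟨p.1, h1', h2'⟩
  -- mu is bounded away from m
  have mu_lt : ∀ k < M, muF B k < m := by
    intro k hk
    have hle : muF B k ≤ m := kLub_le fun b hb => by
      obtain ⟨a, ha, hab⟩ := hb
      exact (hB hab).2
    refine lt_of_le_of_ne hle fun heq => ?_
    have hpt : ∀ u, u < m → ∃ p, p ∈ B ∧ p.1 ≤ k ∧ u < p.2 := by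
      intro u hu
      rw [← heq] at hu
      obtain ⟨b, ⟨a, hak, hab⟩, hub⟩ := lt_kLub hu
      exact ⟨(a, b), hab, hak, hub⟩
    haveI : Nonempty (Iio m) := ⟨⟨p0.2, (memB p0 hp0).2⟩⟩
    set t : Iio m → Set (K × K) :=
      fun u => ((Set.Iic k ×ˢ Set.Iic m) ∩ B) ∩ (univ ×ˢ Icc (kSucc u.1) m) with ht
    have htcl : ∀ u, IsClosed (t u) := fun u =>
      (h1 k hk).inter (isClosed_univ.prod isClosed_Icc)
    have htne : ∀ u, (t u).Nonempty := by
      intro ⟨u, hu⟩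
      obtain ⟨p, hpB, hpk, hup⟩ := hpt u hu
      exact ⟨p, ⟨⟨hpk, (hB hpB).2⟩, hpB⟩, ⟨trivial, kSucc_le hup, (hB hpB).2⟩⟩
    have hdir : Directed (· ⊇ ·) t := by
      intro u v
      refine ⟨⟨max u.1 v.1, max_lt u.2 v.2⟩, ?_, ?_⟩ <;>
      · rintro p ⟨hp1, hp2, hp3⟩
        refine ⟨hp1, trivial, le_trans ?_ hp3.1, hp3.2⟩
        exact kSucc_le (lt_of_le_of_lt (by simp) (lt_kSucc (y := m) (max_lt u.2 v.2)))
    obtain ⟨q, hq⟩ := IsCompact.nonempty_iInter_of_directed_nonempty_isCompact_isClosed t hdir htne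
      (fun u => (htcl u).isCompact) htcl
    have hqB : q ∈ B := (mem_iInter.1 hq ⟨p0.2, (memB p0 hp0).2⟩).1.2
    have hq2 : q.2 = m := by
      refine le_antisymm (hB hqB).2 ?_
      by_contra hlt
      push_neg at hlt
      have h' := (mem_iInter.1 hq ⟨q.2, hlt⟩).2.2.1
      exact absurd h' (not_le.2 (lt_kSucc hlt))
    have : q ∈ (Set.Iic M ×ˢ ({m} : Set K)) ∩ B := ⟨⟨(hB hqB).1, hq2⟩, hqB⟩
    rw [h3] at this; exact this
  -- the master invariant
  have inv : ∀ x : K, (∀ y, y < x → GoodPt M m B y) → GoodPt M m B x ∨ gfun M m B x = (M, m) := by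
    intro x ih
    by_cases hA : Af M m B x = M
    · right; rw [gfun_eq, if_pos hA]
    · have hAle : Af M m B x ≤ M := Af_le fun y hy => (memB _ (ih y hy).1).1.le
      have hAlt : Af M m B x < M := lt_of_le_of_ne hAle hA
      by_cases hG : (∃ y, y < x) ∧ (∀ y, ∀ _h : y < x, (gfun M m B y).1 < Af M m B x)
      · -- limit stage
        have hgx : gfun M m B x = (Af M m B x, Bf M m B x) := by
          rw [gfun_eq, if_neg hA, if_pos hG]
        obtain ⟨⟨y₀, hy₀⟩, hstrict⟩ := hG
        have gmono : ∀ p q : K, p ≤ q → q < x →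
            (gfun M m B p).1 ≤ (gfun M m B q).1 ∧ (gfun M m B p).2 ≤ (gfun M m B q).2 := by
          intro p q hpq hq
          rcases eq_or_lt_of_le hpq with rfl | hlt
          · exact ⟨le_rfl, le_rfl⟩
          · exact ⟨((ih q hq).2 p hlt).1.le, ((ih q hq).2 p hlt).2⟩
        have hsubC : ∀ y, y < x → gfun M m B y ∈ (Set.Iic (Af M m B x) ×ˢ Set.Iic m) ∩ B := by
          intro y hy
          exact ⟨⟨le_Af hy, (hB (ih y hy).1).2⟩, (ih y hy).1⟩
        have hmemcl : (Af M m B x, Bf M m B x) ∈ (Set.Iic (Af M m B x) ×ˢ Set.Iic m) ∩ B := by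
          rw [← (h1 _ hAlt).closure_eq, mem_closure_iff]
          intro U hU hUm
          obtain ⟨u, v, hu, hv, hu1, hv1, huv⟩ := isOpen_prod_iff.1 hU _ _ hUm
          obtain ⟨tt, ⟨-, htA⟩, htu⟩ :=
            exists_Ioc_subset_of_mem_nhds' (hu.mem_nhds hu1) (hstrict y₀ hy₀)
          obtain ⟨y₁, hy₁, hta⟩ := lt_Af htA
          by_cases hvb : ∃ w, w < Bf M m B x
          · obtain ⟨w, hw⟩ := hvb
            obtain ⟨tt', ⟨-, ht'B⟩, ht'v⟩ :=
              exists_Ioc_subset_of_mem_nhds' (hv.mem_nhds hv1) hw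
            obtain ⟨y₂, hy₂, htb⟩ := lt_Bf ht'B
            have hy' : max y₁ y₂ < x := max_lt hy₁ hy₂
            refine ⟨gfun M m B (max y₁ y₂), huv ⟨htu ⟨?_, ?_⟩, ht'v ⟨?_, ?_⟩⟩, hsubC _ hy'⟩
            · exact lt_of_lt_of_le hta (gmono y₁ _ (le_max_left _ _) hy').1
            · exact le_Af hy'
            · exact lt_of_lt_of_le htb (gmono y₂ _ (le_max_right _ _) hy').2
            · exact le_Bf hy'
          · push_neg at hvb
            have hbeq : (gfun M m B y₁).2 = Bf M m B x :=
              le_antisymm (le_Bf hy₁) (hvb _)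
            refine ⟨gfun M m B y₁,
              huv ⟨htu ⟨hta, le_Af hy₁⟩, hbeq ▸ hv1⟩, hsubC _ hy₁⟩
        left
        refine ⟨by rw [hgx]; exact hmemcl.2, fun y hy => ?_⟩
        rw [hgx]
        exact ⟨hstrict y hy, le_Bf hy⟩
      · -- fresh stage
        have hEx : ∃ q, q ∈ B ∧ Af M m B x < q.1 ∧ q.1 < M ∧
            muF B (Af M m B x) < q.2 ∧ q.2 < m := hdense _ hAlt _ (mu_lt _ hAlt)
        have hgx : gfun M m B x = hEx.choose := by
          rw [gfun_eq, if_neg hA, if_neg hG, dif_pos hEx]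
        obtain ⟨hqB, hq1, hq1M, hq2, hq2m⟩ := hEx.choose_spec
        left
        refine ⟨by rw [hgx]; exact hqB, fun y hy => ?_⟩
        rw [hgx]
        constructor
        · exact lt_of_le_of_lt (le_Af hy) hq1
        · exact le_trans (muF_ub (ih y hy).1 (le_Af hy)) hq2.le
  -- the stopping time exists
  have hTne : {x : K | gfun M m B x = (M, m)}.Nonempty := by
    by_contra hT
    have allGood : ∀ x, GoodPt M m B x := fun x =>
      (wellFounded_lt (α := K)).induction (C := fun x => GoodPt M m B x) x fun y ih =>
        (inv y ih).resolve_right (fun hx => hT ⟨y, hx⟩)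
    have hle : ∀ x : K, x ≤ (gfun M m B x).1 := fun x =>
      (wellFounded_lt (α := K)).induction
        (C := fun x => x ≤ (gfun M m B x).1) x fun y ih => by
        rcases le_or_gt y (gfun M m B y).1 with h | h
        · exact h
        · exact absurd (ih _ h) (not_le.2 ((allGood y).2 _ h).1)
    obtain ⟨t, -, htop⟩ :=
      (isCompact_univ : IsCompact (univ : Set K)).exists_isGreatest univ_nonempty
    have h1' : (gfun M m B t).1 < M := (memB _ (allGood t).1).1
    exact absurd (lt_of_le_of_lt (hle t) (lt_of_lt_of_le h1' (htop (mem_univ t))))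
      (lt_irrefl _)
  set l := kMin {x : K | gfun M m B x = (M, m)} hTne with hldef
  have hgl : gfun M m B l = (M, m) :=
    kMin_mem (S := {x : K | gfun M m B x = (M, m)}) (h := hTne)
  have hlmin : ∀ y, y < l → gfun M m B y ≠ (M, m) := fun y hy hEq =>
    absurd (kMin_le (S := {x : K | gfun M m B x = (M, m)}) (h := hTne) hEq) (not_le.2 hy)
  have goodlt : ∀ y, y < l → GoodPt M m B y := fun y =>
    (wellFounded_lt (α := K)).induction (C := fun y => y < l → GoodPt M m B y) y
      fun z ih hz =>
      (inv z fun w hw => ih w hw (lt_trans hw hz)).resolve_right (hlmin z hz)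
  have sMono : ∀ p q : K, p < q → q ≤ l →
      (gfun M m B p).1 < (gfun M m B q).1 ∧ (gfun M m B p).2 ≤ (gfun M m B q).2 := by
    intro p q hpq hq
    rcases lt_or_eq_of_le hq with hql | rfl
    · exact (goodlt q hql).2 p hpq
    · have hgp := goodlt p hpq
      rw [hgl]
      exact ⟨(memB _ hgp.1).1, (hB hgp.1).2⟩
  have gmono : ∀ p q : K, p ≤ q → q ≤ l →
      (gfun M m B p).1 ≤ (gfun M m B q).1 ∧ (gfun M m B p).2 ≤ (gfun M m B q).2 := by
    intro p q hpq hq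
    rcases eq_or_lt_of_le hpq with rfl | h
    · exact ⟨le_rfl, le_rfl⟩
    · exact ⟨(sMono p q h hq).1.le, (sMono p q h hq).2⟩
  have hAfl_le : Af M m B l ≤ M := Af_le fun y hy => (memB _ (goodlt y hy).1).1.le
  have hAl : Af M m B l = M := by
    by_contra hA
    have hAlt := lt_of_le_of_ne hAfl_le hA
    have hEx : ∃ q, q ∈ B ∧ Af M m B l < q.1 ∧ q.1 < M ∧
        muF B (Af M m B l) < q.2 ∧ q.2 < m := hdense _ hAlt _ (mu_lt _ hAlt)
    rw [gfun_eq, if_neg hA] at hgl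
    by_cases hG : (∃ y, y < l) ∧ (∀ y, ∀ _h : y < l, (gfun M m B y).1 < Af M m B l)
    · rw [if_pos hG] at hgl
      exact hA (congrArg Prod.fst hgl)
    · rw [if_neg hG, dif_pos hEx] at hgl
      exact hnB (hgl ▸ hEx.choose_spec.1)
  have hlle : ∀ y, y ≤ l → y ≤ (gfun M m B y).1 := by
    intro y
    refine (wellFounded_lt (α := K)).induction
      (C := fun z => z ≤ l → z ≤ (gfun M m B z).1) y (fun z ih hz => ?_)
    by_contra hc
    push_neg at hc
    have h1' := (sMono _ _ hc hz).1
    exact absurd (ih _ hc (le_trans hc.le hz)) (not_le.2 h1')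
  have hlM : l ≤ M := by
    have := hlle l le_rfl
    rwa [hgl] at this
  have hIiol : (Iio l).Nonempty := by
    by_contra hc
    push_neg at hc
    have hf : Af M m B l ≤ p0.1 :=
      Af_le fun y hy => absurd hy (eq_empty_iff_forall_notMem.1 hc y)
    rw [hAl] at hf
    exact absurd (lt_of_le_of_lt hf (memB p0 hp0).1) (lt_irrefl M)
  have hllim : ∀ t, t < l → ∃ w, t < w ∧ w < l := by
    intro t ht
    by_contra hc
    push_neg at hc
    have hbnd : Af M m B l ≤ (gfun M m B t).1 := by
      refine Af_le fun y hy => ?_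
      have hyt : y ≤ t := by
        by_contra hyt
        push_neg at hyt
        exact absurd hy (not_lt.2 (hc y hyt))
      exact (gmono y t hyt ht.le).1
    rw [hAl] at hbnd
    exact absurd (lt_of_le_of_lt hbnd (memB _ (goodlt t ht).1).1) (lt_irrefl M)
  have hclos : l ∈ closure (Iio l) := by
    rw [mem_closure_iff]
    intro U hU hlU
    obtain ⟨t0, ht0⟩ := hIiol
    obtain ⟨t, ⟨-, htl⟩, hsub⟩ := exists_Ioc_subset_of_mem_nhds' (hU.mem_nhds hlU) ht0
    obtain ⟨w, hw1, hw2⟩ := hllim t htl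
    exact ⟨w, hsub ⟨hw1, hw2.le⟩, hw2⟩
  have hBvl : ∀ u, u < m → ∃ y, y < l ∧ u < (gfun M m B y).2 := by
    intro u hu
    obtain ⟨p, hpB, -, hp1M, hup2, -⟩ := hdense p0.1 (memB p0 hp0).1 u hu
    have hp2mu : p.2 ≤ muF B p.1 := muF_ub hpB le_rfl
    have hpA : p.1 < Af M m B l := by rw [hAl]; exact hp1M
    obtain ⟨y, hy, hpy⟩ := lt_Af hpA
    have hy' : kSucc y < l := by
      obtain ⟨w, hyw, hwl⟩ := hllim y hy
      exact lt_of_le_of_lt (kSucc_le hyw) hwl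
    have hyy' : y < kSucc y := lt_kSucc hy
    have hAy' : Af M m B (kSucc y) = (gfun M m B y).1 := by
      refine le_antisymm (Af_le fun z hz => ?_) (le_Af hyy')
      have hzy : z ≤ y := by
        by_contra hzy
        push_neg at hzy
        exact absurd hz (not_lt.2 (kSucc_le hzy))
      exact (gmono z y hzy hy.le).1
    have hAy'M : Af M m B (kSucc y) < M := by
      rw [hAy']; exact (memB _ (goodlt y hy).1).1
    have hG2 : ¬((∃ z, z < kSucc y) ∧
        (∀ z, ∀ _h : z < kSucc y, (gfun M m B z).1 < Af M m B (kSucc y))) := by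
      rintro ⟨-, hall⟩
      have hyc := hall y hyy'
      rw [hAy'] at hyc
      exact lt_irrefl _ hyc
    have hEx : ∃ q, q ∈ B ∧ Af M m B (kSucc y) < q.1 ∧ q.1 < M ∧
        muF B (Af M m B (kSucc y)) < q.2 ∧ q.2 < m := hdense _ hAy'M _ (mu_lt _ hAy'M)
    have hgy' : gfun M m B (kSucc y) = hEx.choose := by
      rw [gfun_eq, if_neg (ne_of_lt hAy'M), if_neg hG2, dif_pos hEx]
    refine ⟨kSucc y, hy', ?_⟩
    rw [hgy']
    refine lt_of_le_of_lt ?_ hEx.choose_spec.2.2.2.1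
    rw [hAy']
    exact le_trans (le_trans hup2.le hp2mu) (muF_mono B hpy.le)
  -- values at internal limit stages
  have glimit : ∀ z, z < l → (Iio z).Nonempty → (∀ t, t < z → ∃ w, t < w ∧ w < z) →
      gfun M m B z = (Af M m B z, Bf M m B z) := by
    intro z hzl hne hlim
    obtain ⟨w0, hw0⟩ := hne
    have hA : Af M m B z ≠ M := by
      intro hA
      apply hlmin z hzl
      rw [gfun_eq, if_pos hA]
    have hG : (∃ y, y < z) ∧ (∀ y, ∀ _h : y < z, (gfun M m B y).1 < Af M m B z) := by
      refine ⟨⟨w0, hw0⟩, fun y hy => ?_⟩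
      obtain ⟨w, hyw, hwz⟩ := hlim y hy
      exact lt_of_lt_of_le (sMono y w hyw (le_of_lt (lt_trans hwz hzl))).1 (le_Af hwz)
    rw [gfun_eq, if_neg hA, if_pos hG]
  -- continuity
  have contg : ContinuousOn (gfun M m B) (Iic l) := by
    intro z hz
    have hzlle : z ≤ l := hz
    have hright : Filter.Tendsto (gfun M m B) (𝓝[Ici z] z) (𝓝 (gfun M m B z)) := by
      refine (tendsto_pure_nhds (gfun M m B) z).mono_left ?_
      rw [Filter.le_pure_iff]
      by_cases hzt : ∃ w, z < w
      · obtain ⟨w, hw⟩ := hzt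
        refine mem_nhdsWithin.2 ⟨Iio (kSucc z), isOpen_Iio, lt_kSucc hw, ?_⟩
        rintro y ⟨hy1, hy2⟩
        have hyz : ¬ z < y := fun h => absurd hy1 (not_lt.2 (kSucc_le h))
        show y = z
        exact le_antisymm (not_lt.1 hyz) hy2
      · push_neg at hzt
        refine mem_nhdsWithin.2 ⟨univ, isOpen_univ, trivial, ?_⟩
        rintro y ⟨-, hy2⟩
        show y = z
        exact le_antisymm (hzt y) hy2
    have hleft : Filter.Tendsto (gfun M m B) (𝓝[Iio z] z) (𝓝 (gfun M m B z)) := by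
      by_cases hne : (Iio z).Nonempty
      swap
      · rw [not_nonempty_iff_eq_empty] at hne
        rw [hne, nhdsWithin_empty]
        exact Filter.tendsto_bot
      by_cases hlim : ∀ t, t < z → ∃ w, t < w ∧ w < z
      swap
      · push_neg at hlim
        obtain ⟨t, htz, hemp⟩ := hlim
        have hbot : 𝓝[Iio z] z = ⊥ := by
          rw [← Filter.empty_mem_iff_bot]
          refine mem_nhdsWithin.2 ⟨Ioi t, isOpen_Ioi, htz, ?_⟩
          rintro w ⟨hw1, hw2⟩
          exact absurd hw2 (not_lt.2 (hemp w hw1))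
        rw [hbot]
        exact Filter.tendsto_bot
      have hprops : (∀ u, u < (gfun M m B z).1 → ∃ y, y < z ∧ u < (gfun M m B y).1) ∧
          (∀ u, u < (gfun M m B z).2 → ∃ y, y < z ∧ u < (gfun M m B y).2) := by
        rcases eq_or_lt_of_le hzlle with rfl | hzl
        · constructor
          · intro u hu
            rw [hgl] at hu
            have hu' : u < Af M m B l := by rw [hAl]; exact hu
            exact lt_Af hu'
          · intro u hu
            rw [hgl] at hu
            exact hBvl u hu
        · have hgz := glimit z hzl hne hlim
          constructor
          · intro u hu
            rw [hgz] at hu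
            exact lt_Af hu
          · intro u hu
            rw [hgz] at hu
            exact lt_Bf hu
      obtain ⟨aprop, bprop⟩ := hprops
      have amax : ∀ w, w < z → (gfun M m B w).1 ≤ (gfun M m B z).1 := fun w hw =>
        (gmono w z hw.le hzlle).1
      have bmax : ∀ w, w < z → (gfun M m B w).2 ≤ (gfun M m B z).2 := fun w hw =>
        (gmono w z hw.le hzlle).2
      have ha : Filter.Tendsto (fun y => (gfun M m B y).1) (𝓝[Iio z] z)
          (𝓝 (gfun M m B z).1) := by
        rw [tendsto_order]
        constructor
        · intro u hu
          obtain ⟨y₁, hy₁, hu1⟩ := aprop u hu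
          filter_upwards [mem_nhdsWithin.2
            (⟨Ioi y₁, isOpen_Ioi, hy₁, subset_rfl⟩ :
              ∃ U, IsOpen U ∧ z ∈ U ∧ U ∩ Iio z ⊆ Ioi y₁ ∩ Iio z)] with w hw
          exact lt_of_lt_of_le hu1
            (gmono y₁ w (le_of_lt hw.1) (le_trans (le_of_lt hw.2) hzlle)).1
        · intro u hu
          filter_upwards [self_mem_nhdsWithin] with w hw
          exact lt_of_le_of_lt (amax w hw) hu
      have hb : Filter.Tendsto (fun y => (gfun M m B y).2) (𝓝[Iio z] z)
          (𝓝 (gfun M m B z).2) := by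
        rw [tendsto_order]
        constructor
        · intro u hu
          obtain ⟨y₁, hy₁, hu1⟩ := bprop u hu
          filter_upwards [mem_nhdsWithin.2
            (⟨Ioi y₁, isOpen_Ioi, hy₁, subset_rfl⟩ :
              ∃ U, IsOpen U ∧ z ∈ U ∧ U ∩ Iio z ⊆ Ioi y₁ ∩ Iio z)] with w hw
          exact lt_of_lt_of_le hu1
            (gmono y₁ w (le_of_lt hw.1) (le_trans (le_of_lt hw.2) hzlle)).2
        · intro u hu
          filter_upwards [self_mem_nhdsWithin] with w hw
          exact lt_of_le_of_lt (bmax w hw) hu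
      exact ha.prodMk_nhds hb
    have hunion : 𝓝[Iic l] z ≤ 𝓝[Iio z] z ⊔ 𝓝[Ici z] z := by
      rw [← nhdsWithin_union]
      exact nhdsWithin_mono z (fun w _ => (lt_or_ge w z).imp id id)
    exact Filter.Tendsto.mono_left (Filter.tendsto_sup.2 ⟨hleft, hright⟩) hunion
  -- conclusion
  refine ⟨l, hlM, hclos, (Set.Iic l).restrict (gfun M m B),
    continuousOn_iff_continuous_restrict.1 contg, fun x hx => (goodlt x.1 hx).1,
    fun x hx => ?_⟩
  show gfun M m B x.1 = (M, m)
  rw [hx]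
  exact hgl
end

section
/- Let J be a non-compact well-ordered space with one-point compactification J ∪ {∞_J}. The space (J ∪ {∞_J}) × (J ∪ {∞_J}), with the product topology, is a J-convergence space. -/
open Set Topology TopologicalSpace

universe u v w

section AuxHelpers
variable {α : Type*} [LinearOrder α] [TopologicalSpace α] [OrderTopology α] [WellFoundedLT α]

/-- In a well-ordered space, every point has an open neighborhood contained in `Iic p`. -/
lemma aux_nhd_le (p : α) : ∃ u : Set α, IsOpen u ∧ p ∈ u ∧ ∀ z ∈ u, z ≤ p := by
  by_cases h : (Ioi p).Nonempty
  · refine ⟨Iio (wellFounded_lt.min (Ioi p) h), isOpen_Iio,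
      wellFounded_lt.min_mem (Ioi p) h, fun z hz => ?_⟩
    by_contra hz'
    exact wellFounded_lt.not_lt_min (Ioi p) (lt_of_not_ge hz') hz
  · exact ⟨univ, isOpen_univ, mem_univ _, fun z _ => le_of_not_gt fun hzp => h ⟨z, hzp⟩⟩

/-- In a well-ordered space a point in the closure of `S` but not in `S` is approached
strictly from below. -/
lemma aux_closure_below {S : Set α} {p : α} (h : p ∈ closure S) (hp : p ∉ S) :
    p ∈ closure (S ∩ Iio p) := by
  obtain ⟨u, hu, hpu, hule⟩ := aux_nhd_le p
  rw [mem_closure_iff] at h ⊢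
  intro o ho hpo
  obtain ⟨s, hso, hsS⟩ := h (o ∩ u) (ho.inter hu) ⟨hpo, hpu⟩
  have hsp : s < p := lt_of_le_of_ne (hule s hso.2) (fun hsp => hp (hsp ▸ hsS))
  exact ⟨s, hso.1, hsS, hsp⟩

lemma aux_mem_closure {S : Set α} {p : α} (hne : ∃ l, l < p)
    (happ : ∀ c < p, ∃ s ∈ S, c < s ∧ s < p) : p ∈ closure S := by
  rw [mem_closure_iff]
  intro o ho hpo
  obtain ⟨l, hl, hIoc⟩ := exists_Ioc_subset_of_mem_nhds (ho.mem_nhds hpo) hne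
  obtain ⟨s, hsS, hls, hsp⟩ := happ l hl
  exact ⟨s, hIoc ⟨hls, hsp.le⟩, hsS⟩

variable {β : Type*} [LinearOrder β] [TopologicalSpace β] [OrderTopology β] [WellFoundedLT β]

/-- A strictly monotone map between well-ordered spaces with closed range is continuous. -/
lemma aux_cont_s7 (ι : α → β) (hmono : StrictMono ι) (hcl : IsClosed (range ι)) :
    Continuous ι := by
  rw [‹OrderTopology β›.topology_eq_generate_intervals, continuous_generateFrom_iff]
  rintro s ⟨a, rfl | rfl⟩
  · -- preimage of Ioi a
    by_cases hU : (ι ⁻¹' Ioi a).Nonempty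
    · set U := ι ⁻¹' Ioi a with hUdef
      set m := wellFounded_lt.min U hU with hm
      have hmU : m ∈ U := wellFounded_lt.min_mem U hU
      have hUm : U = Ici m := by
        ext z
        constructor
        · intro hz
          by_contra hz'
          exact wellFounded_lt.not_lt_min U hz (lt_of_not_ge hz')
        · intro hz
          exact lt_of_lt_of_le hmU (hmono.monotone hz)
      rw [hUm]
      by_cases h1 : ∃ z, z < m
      · by_cases h2 : ∃ z' < m, ∀ z, ¬(z' < z ∧ z < m)
        · obtain ⟨z', hz'm, hz'⟩ := h2
          have : Ici m = Ioi z' := by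
            ext z
            constructor
            · intro hz; exact lt_of_lt_of_le hz'm hz
            · intro hz
              by_contra hzm
              exact hz' z ⟨hz, lt_of_not_ge hzm⟩
          rw [this]; exact isOpen_Ioi
        · -- limit case: contradiction
          exfalso
          push_neg at h2
          set T := ι '' Iio m with hT
          have hSB : {p : β | ∀ z < m, ι z < p}.Nonempty := ⟨ι m, fun z hz => hmono hz⟩
          set s := wellFounded_lt.min _ hSB with hs
          have hsSB : ∀ z < m, ι z < s := wellFounded_lt.min_mem _ hSB
          have hsle : s ≤ ι m := by
            by_contra h
            exact wellFounded_lt.not_lt_min {p : β | ∀ z < m, ι z < p} (fun z hz => hmono hz) (lt_of_not_ge h)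
          have hscl : s ∈ closure T := by
            obtain ⟨z₁, hz₁⟩ := h1
            refine aux_mem_closure ⟨ι z₁, hsSB z₁ hz₁⟩ ?_
            intro c hc
            have : ∃ z < m, ¬ ι z < c := by
              by_contra hcon
              push_neg at hcon
              exact absurd hc (not_lt_of_ge (by
                by_contra h'
                exact wellFounded_lt.not_lt_min {p : β | ∀ z < m, ι z < p} hcon (lt_of_not_ge h')))
            obtain ⟨z, hzm, hzc⟩ := this
            obtain ⟨z'', hzz'', hz''m⟩ := h2 z hzm
            exact ⟨ι z'', ⟨z'', hz''m, rfl⟩, lt_of_le_of_lt (le_of_not_gt hzc) (hmono hzz''),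
              hsSB z'' hz''m⟩
          have hsrange : s ∈ range ι := hcl.closure_subset_iff.mpr (by
            rintro t ⟨z, hz, rfl⟩; exact ⟨z, rfl⟩) hscl
          have hTle : T ⊆ Iic a := by
            rintro t ⟨z, hz, rfl⟩
            have hzU : z ∉ U := fun hzU => wellFounded_lt.not_lt_min U hzU hz
            exact le_of_not_gt hzU
          have hsa : s ≤ a := (isClosed_Iic.closure_subset_iff.mpr hTle) hscl
          obtain ⟨z₀, hz₀⟩ := hsrange
          have hz₀m : z₀ = m := by
            rcases lt_trichotomy z₀ m with h | h | h
            · exact absurd (hz₀ ▸ hsSB z₀ h) (lt_irrefl s)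
            · exact h
            · exact absurd (hz₀ ▸ (hsle.trans_lt (hmono h))) (lt_irrefl _)
          exact absurd (lt_of_lt_of_le (hz₀ ▸ hz₀m ▸ hmU) hsa) (lt_irrefl a)
      · have : Ici m = univ := eq_univ_of_forall (fun z => le_of_not_gt fun hz => h1 ⟨z, hz⟩)
        rw [this]; exact isOpen_univ
    · rw [not_nonempty_iff_eq_empty] at hU
      rw [hU]; exact isOpen_empty
  · -- preimage of Iio a : a lower set in a well-order, hence open
    by_cases hc : (ι ⁻¹' Iio a)ᶜ.Nonempty
    · have : ι ⁻¹' Iio a = Iio (wellFounded_lt.min _ hc) := by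
        ext z
        constructor
        · intro hz
          by_contra hz'
          have hmz : wellFounded_lt.min _ hc ≤ z := le_of_not_gt hz'
          exact (wellFounded_lt.min_mem _ hc) (lt_of_le_of_lt (hmono.monotone hmz) hz)
        · intro hz
          by_contra hz'
          exact wellFounded_lt.not_lt_min (ι ⁻¹' Iio a)ᶜ hz' hz
      rw [this]; exact isOpen_Iio
    · rw [not_nonempty_iff_eq_empty, compl_empty_iff] at hc
      rw [hc]; exact isOpen_univ

/-- The image of an initial segment of a sup-continuous strictly monotone ordinal-indexed
sequence is closed. -/
lemma aux_closed_image (ψ : Ordinal.{u} → α) (lam : Ordinal.{u})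
    (hmono : ∀ o' o : Ordinal.{u}, o' < o → o ≤ lam → ψ o' < ψ o)
    (hlub : ∀ o ≤ lam, Order.IsSuccLimit o → ∀ u : α, (∀ o' < o, ψ o' ≤ u) → ψ o ≤ u) :
    IsClosed (ψ '' Iic lam) := by
  have hmle : ∀ o' o : Ordinal.{u}, o' ≤ o → o ≤ lam → ψ o' ≤ ψ o := by
    intro o' o h hl
    rcases eq_or_lt_of_le h with rfl | h
    · exact le_rfl
    · exact (hmono _ _ h hl).le
  rw [← closure_subset_iff_isClosed]
  intro p hp
  by_contra hpS
  have hSle : ψ '' Iic lam ⊆ Iic (ψ lam) := by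
    rintro t ⟨o, ho, rfl⟩; exact hmle o lam ho le_rfl
  have hple : p ≤ ψ lam := (isClosed_Iic.closure_subset_iff.mpr hSle) hp
  have hbelow := aux_closure_below hp hpS
  have hne : (ψ '' Iic lam ∩ Iio p).Nonempty := by
    by_contra h
    rw [not_nonempty_iff_eq_empty] at h
    rw [h] at hbelow
    simp at hbelow
  set Q := {o : Ordinal.{u} | o ≤ lam ∧ p ≤ ψ o} with hQ
  have hQne : Q.Nonempty := ⟨lam, le_rfl, hple⟩
  set os := sInf Q with hos
  have hosQ : os ∈ Q := csInf_mem hQne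
  have hpre : ∀ o' < os, ψ o' < p := by
    intro o' ho'
    have : o' ∉ Q := notMem_of_lt_csInf ho' ⟨0, fun x _ => zero_le (a := x)⟩
    rw [hQ, mem_setOf_eq, not_and] at this
    exact lt_of_not_ge (this (ho'.le.trans hosQ.1))
  rcases Ordinal.zero_or_succ_or_isSuccLimit os with h0 | ⟨o'', hsucc⟩ | hlim
  · obtain ⟨t, ⟨o₄, ho₄, rfl⟩, htp⟩ := hne
    have : ψ os ≤ ψ o₄ := hmle _ _ (h0 ▸ zero_le (a := o₄)) ho₄
    exact absurd (this.trans_lt (htp.trans_le hosQ.2)) (lt_irrefl _)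
  · have ho''lt : o'' < os := hsucc ▸ Order.lt_succ o''
    have ho''lam : o'' ≤ lam := ho''lt.le.trans hosQ.1
    have h1 : ψ o'' < p := hpre o'' ho''lt
    rw [mem_closure_iff] at hbelow
    obtain ⟨s, hsIoi, ⟨o₅, ho₅, rfl⟩, hso⟩ := hbelow (Ioi (ψ o'')) isOpen_Ioi h1
    have ho₅gt : o'' < o₅ := by
      by_contra h
      exact absurd (hmle _ _ (le_of_not_gt h) ho''lam) (not_le_of_gt hsIoi)
    have : os ≤ o₅ := hsucc ▸ Order.succ_le_of_lt ho₅gt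
    exact absurd ((hosQ.2.trans (hmle _ _ this ho₅)).trans_lt hso) (lt_irrefl _)
  · have : ψ os ≤ p := hlub os hosQ.1 hlim p (fun o' ho' => (hpre o' ho').le)
    have hpeq : p = ψ os := le_antisymm hosQ.2 this
    exact hpS ⟨os, hosQ.1, hpeq.symm⟩

/-- One-dimensional extraction: from a closure point of `B` we obtain an "almost closed"
set `C ⊆ B`. -/
lemma aux_oneDim {B : Set α} {b : α} (hb : b ∈ closure B) (hbB : b ∉ B) :
    ∃ (C : Set α) (ℓ : α), C ⊆ B ∧ ℓ ∉ B ∧ (∀ t ∈ C, t < ℓ) ∧ ℓ ∈ closure C ∧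
      closure C \ C = {ℓ} ∧ IsLeast {s | ∀ t ∈ C, t < s} ℓ := by
  have hDne : (closure B \ B).Nonempty := ⟨b, hb, hbB⟩
  set ℓ := wellFounded_lt.min _ hDne with hℓ
  have hℓD : ℓ ∈ closure B \ B := wellFounded_lt.min_mem _ hDne
  set C := B ∩ Iio ℓ with hC
  have hCB : C ⊆ B := inter_subset_left
  have hbound : ∀ t ∈ C, t < ℓ := fun t ht => ht.2
  have hℓcl : ℓ ∈ closure C := aux_closure_below hℓD.1 hℓD.2
  have hclosed : closure C ⊆ C ∪ {ℓ} := by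
    intro p hp
    by_contra hpC
    rw [mem_union, not_or] at hpC
    have hpB : p ∈ closure B := closure_mono hCB hp
    have hple : p ≤ ℓ := (isClosed_Iic.closure_subset_iff.mpr
      (fun t ht => le_of_lt ht.2 : C ⊆ Iic ℓ)) hp
    have hplt : p < ℓ := lt_of_le_of_ne hple (by simpa using hpC.2)
    rcases Classical.em (p ∈ B) with h | h
    · exact hpC.1 ⟨h, hplt⟩
    · exact wellFounded_lt.not_lt_min (closure B \ B) ⟨hpB, h⟩ hplt
  refine ⟨C, ℓ, hCB, hℓD.2, hbound, hℓcl, ?_, ?_⟩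
  · apply Subset.antisymm
    · rintro p ⟨hp, hpC⟩
      rcases hclosed hp with h | h
      · exact absurd h hpC
      · exact h
    · rintro p rfl
      exact ⟨hℓcl, fun h => absurd (hbound _ h) (lt_irrefl _)⟩
  · refine ⟨hbound, fun s hs => ?_⟩
    by_contra h
    rw [mem_closure_iff] at hℓcl
    obtain ⟨t, htIoi, htC⟩ := hℓcl (Ioi s) isOpen_Ioi (lt_of_not_ge h)
    exact absurd (hs t htC) (not_lt_of_gt htIoi)

end AuxHelpers

section Package
variable {J : Type v} [LinearOrder J] [WellFoundedLT J]

/-- Packaging: a set `C` with a least strict upper bound `ℓ` which "almost closes" it gives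
an almost closed subset of `J` together with a continuous embedding of its one-point
compactification. -/
lemma aux_package {C : Set (WithTop J)} {ℓ : WithTop J}
    (hbound : ∀ t ∈ C, t < ℓ) (hdiff : closure C \ C = {ℓ})
    (hleast : IsLeast {s | ∀ t ∈ C, t < s} ℓ) :
    AlmostClosed {j : J | (j : WithTop J) ∈ C} ∧
    StrictMono (WithTop.recTopCoe ℓ
      (fun i : ↥{j : J | (j : WithTop J) ∈ C} => ((i : J) : WithTop J)) :
      WithTop ↥{j : J | (j : WithTop J) ∈ C} → WithTop J) ∧
    Continuous (WithTop.recTopCoe ℓ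
      (fun i : ↥{j : J | (j : WithTop J) ∈ C} => ((i : J) : WithTop J)) :
      WithTop ↥{j : J | (j : WithTop J) ∈ C} → WithTop J) := by
  haveI : OrderTopology (WithTop J) := ⟨rfl⟩
  set I : Set J := {j : J | (j : WithTop J) ∈ C} with hI
  haveI : OrderTopology (WithTop ↥I) := ⟨rfl⟩
  set ι : WithTop ↥I → WithTop J :=
    WithTop.recTopCoe ℓ (fun i : ↥I => ((i : J) : WithTop J)) with hι
  have himg : (fun j : J => (j : WithTop J)) '' I = C := by
    ext t
    constructor
    · rintro ⟨j, hj, rfl⟩; exact hj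
    · intro ht
      have : t ≠ ⊤ := fun h => absurd (hbound t ht) (by simp [h])
      obtain ⟨j, rfl⟩ := WithTop.ne_top_iff_exists.mp this
      exact ⟨j, ht, rfl⟩
  have hmono : StrictMono ι := by
    intro z z' hzz
    induction z using WithTop.recTopCoe with
    | top => exact absurd hzz (by simp [not_top_lt])
    | coe i =>
      induction z' using WithTop.recTopCoe with
      | top => exact hbound _ i.2
      | coe i' =>
        have h1 : (i : J) < (i' : J) := by
          have := WithTop.coe_lt_coe.mp hzz
          exact_mod_cast this
        show ((i : J) : WithTop J) < ((i' : J) : WithTop J)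
        exact_mod_cast h1
  have hrange : range ι = C ∪ {ℓ} := by
    ext t
    constructor
    · rintro ⟨z, rfl⟩
      induction z using WithTop.recTopCoe with
      | top => exact Or.inr rfl
      | coe i => exact Or.inl i.2
    · rintro (ht | ht)
      · have : t ≠ ⊤ := fun h => absurd (hbound t ht) (by simp [h])
        obtain ⟨j, rfl⟩ := WithTop.ne_top_iff_exists.mp this
        exact ⟨WithTop.some ⟨j, ht⟩, rfl⟩
      · exact ⟨⊤, ht.symm ▸ rfl⟩
  have hclCsub : closure C ⊆ C ∪ {ℓ} := by
    intro p hp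
    rcases Classical.em (p ∈ C) with h | h
    · exact Or.inl h
    · exact Or.inr (hdiff ▸ (⟨hp, h⟩ : p ∈ closure C \ C))
  have hclosed : IsClosed (C ∪ {ℓ}) := by
    rw [← closure_subset_iff_isClosed]
    intro p hp
    rw [closure_union] at hp
    rcases hp with hp | hp
    · exact hclCsub hp
    · rw [show closure {ℓ} = {ℓ} from (isClosed_singleton).closure_eq] at hp
      exact Or.inr hp
  refine ⟨⟨ℓ, by rw [himg]; exact hdiff, by rw [himg]; exact hleast⟩, hmono, ?_⟩
  exact aux_cont_s7 ι hmono (hrange ▸ hclosed)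

/-- The vertical-section case. -/
lemma aux_vert {A : Set (WithTop J × WithTop J)} {x : WithTop J × WithTop J}
    (hxA : x ∉ A) (hvert : x ∈ closure (A ∩ {y | y.1 = x.1})) :
    ∃ I : Set J, AlmostClosed I ∧ ∃ f : WithTop ↥I → WithTop J × WithTop J, Continuous f ∧
      (∀ i : ↥I, f (WithTop.some i) ∈ A) ∧ f ⊤ ∉ A := by
  haveI : OrderTopology (WithTop J) := ⟨rfl⟩
  set B : Set (WithTop J) := {q | (x.1, q) ∈ A} with hB
  have hbB : x.2 ∉ B := by
    intro h
    rw [hB, mem_setOf_eq, Prod.mk.eta] at h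
    exact hxA h
  have hbcl : x.2 ∈ closure B := by
    rw [mem_closure_iff]
    intro o ho hxo
    obtain ⟨y, hy1, hy2⟩ := mem_closure_iff.mp hvert ((univ : Set (WithTop J)) ×ˢ o)
      (isOpen_univ.prod ho) ⟨mem_univ _, hxo⟩
    refine ⟨y.2, hy1.2, ?_⟩
    show (x.1, y.2) ∈ A
    rw [← hy2.2, Prod.mk.eta]
    exact hy2.1
  obtain ⟨C, ℓ, hCB, hℓB, hbound, hℓcl, hdiff, hleast⟩ := aux_oneDim hbcl hbB
  obtain ⟨hAC, hmono, hcont⟩ := aux_package hbound hdiff hleast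
  refine ⟨_, hAC, fun z => (x.1, WithTop.recTopCoe ℓ
      (fun i : ↥{j : J | (j : WithTop J) ∈ C} => ((i : J) : WithTop J)) z),
    continuous_const.prodMk hcont, ?_, ?_⟩
  · intro i
    show (x.1, ((i : J) : WithTop J)) ∈ A
    exact hCB i.2
  · show (x.1, ℓ) ∉ A
    exact hℓB

/-- The horizontal-section case. -/
lemma aux_horiz {A : Set (WithTop J × WithTop J)} {x : WithTop J × WithTop J}
    (hxA : x ∉ A) (hhor : x ∈ closure (A ∩ {y | y.2 = x.2})) :
    ∃ I : Set J, AlmostClosed I ∧ ∃ f : WithTop ↥I → WithTop J × WithTop J, Continuous f ∧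
      (∀ i : ↥I, f (WithTop.some i) ∈ A) ∧ f ⊤ ∉ A := by
  haveI : OrderTopology (WithTop J) := ⟨rfl⟩
  set B : Set (WithTop J) := {q | (q, x.2) ∈ A} with hB
  have hbB : x.1 ∉ B := by
    intro h
    rw [hB, mem_setOf_eq, Prod.mk.eta] at h
    exact hxA h
  have hbcl : x.1 ∈ closure B := by
    rw [mem_closure_iff]
    intro o ho hxo
    obtain ⟨y, hy1, hy2⟩ := mem_closure_iff.mp hhor (o ×ˢ (univ : Set (WithTop J)))
      (ho.prod isOpen_univ) ⟨hxo, mem_univ _⟩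
    refine ⟨y.1, hy1.1, ?_⟩
    show (y.1, x.2) ∈ A
    rw [← hy2.2, Prod.mk.eta]
    exact hy2.1
  obtain ⟨C, ℓ, hCB, hℓB, hbound, hℓcl, hdiff, hleast⟩ := aux_oneDim hbcl hbB
  obtain ⟨hAC, hmono, hcont⟩ := aux_package hbound hdiff hleast
  refine ⟨_, hAC, fun z => (WithTop.recTopCoe ℓ
      (fun i : ↥{j : J | (j : WithTop J) ∈ C} => ((i : J) : WithTop J)) z, x.2),
    hcont.prodMk continuous_const, ?_, ?_⟩
  · intro i
    show (((i : J) : WithTop J), x.2) ∈ A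
    exact hCB i.2
  · show (ℓ, x.2) ∉ A
    exact hℓB

end Package
section Diag
variable {J : Type v} [LinearOrder J] [WellFoundedLT J]

/-- The diagonal case: `x` is a minimal non-adherence witness approached strictly from
below in both coordinates. -/
lemma aux_diag {A : Set (WithTop J × WithTop J)} {x : WithTop J × WithTop J}
    (hxcl : x ∈ closure A) (hxA : x ∉ A)
    (hxmin : ∀ y ∈ closure A \ A, ¬(y.1 < x.1 ∧ y.2 < x.2))
    (hvert : x ∉ closure (A ∩ {y | y.1 = x.1}))
    (hhor : x ∉ closure (A ∩ {y | y.2 = x.2})) :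
    ∃ I : Set J, AlmostClosed I ∧ ∃ f : WithTop ↥I → WithTop J × WithTop J, Continuous f ∧
      (∀ i : ↥I, f (WithTop.some i) ∈ A) ∧ f ⊤ ∉ A := by
  haveI : OrderTopology (WithTop J) := ⟨rfl⟩
  -- open sets avoiding the sections
  rw [mem_closure_iff] at hvert hhor
  push_neg at hvert hhor
  obtain ⟨V₁, hV₁o, hxV₁, hV₁⟩ := hvert
  obtain ⟨V₂, hV₂o, hxV₂, hV₂⟩ := hhor
  obtain ⟨U₁, U₂, hU₁o, hU₂o, hxU₁, hxU₂, hbox⟩ :=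
    isOpen_prod_iff.mp (hV₁o.inter hV₂o) x.1 x.2 (by rw [Prod.mk.eta]; exact ⟨hxV₁, hxV₂⟩)
  -- the main approximation principle
  have hH : ∀ O : Set (WithTop J × WithTop J), IsOpen O → x ∈ O →
      ∃ y, y ∈ A ∧ y ∈ O ∧ y.1 < x.1 ∧ y.2 < x.2 := by
    intro O hO hxO
    obtain ⟨ua, hua_o, haua, hua_le⟩ := aux_nhd_le x.1
    obtain ⟨ub, hub_o, hbub, hub_le⟩ := aux_nhd_le x.2
    have hWo : IsOpen (O ∩ (U₁ ×ˢ U₂) ∩ (ua ×ˢ ub)) :=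
      (hO.inter (hU₁o.prod hU₂o)).inter (hua_o.prod hub_o)
    have hxW : x ∈ O ∩ (U₁ ×ˢ U₂) ∩ (ua ×ˢ ub) :=
      ⟨⟨hxO, ⟨hxU₁, hxU₂⟩⟩, ⟨haua, hbub⟩⟩
    obtain ⟨y, hyW, hyA⟩ := mem_closure_iff.mp hxcl _ hWo hxW
    have hy1le : y.1 ≤ x.1 := hua_le _ hyW.2.1
    have hy2le : y.2 ≤ x.2 := hub_le _ hyW.2.2
    have hyV : y ∈ V₁ ∩ V₂ := hbox hyW.1.2
    have hy1 : y.1 ≠ x.1 := by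
      intro h
      have hmem : y ∈ V₁ ∩ (A ∩ {y | y.1 = x.1}) := ⟨hyV.1, hyA, h⟩
      rw [hV₁] at hmem
      exact absurd hmem (notMem_empty y)
    have hy2 : y.2 ≠ x.2 := by
      intro h
      have hmem : y ∈ V₂ ∩ (A ∩ {y | y.2 = x.2}) := ⟨hyV.2, hyA, h⟩
      rw [hV₂] at hmem
      exact absurd hmem (notMem_empty y)
    exact ⟨y, hyA, hyW.1.1, lt_of_le_of_ne hy1le hy1, lt_of_le_of_ne hy2le hy2⟩
  -- base bounds
  obtain ⟨y₀, hy₀A, _, hy₀1, hy₀2⟩ := hH univ isOpen_univ (mem_univ x)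
  obtain ⟨c₀, hc₀lt, hIocU₁⟩ := exists_Ioc_subset_of_mem_nhds (hU₁o.mem_nhds hxU₁) ⟨y₀.1, hy₀1⟩
  obtain ⟨d₀, hd₀lt, hIocU₂⟩ := exists_Ioc_subset_of_mem_nhds (hU₂o.mem_nhds hxU₂) ⟨y₀.2, hy₀2⟩
  -- least upper bounds in WithTop J
  have hlub0 : ∀ T : Set (WithTop J), {u : WithTop J | ∀ t ∈ T, t ≤ u}.Nonempty :=
    fun T => ⟨⊤, fun t _ => le_top⟩
  set lub : Set (WithTop J) → WithTop J :=
    fun T => wellFounded_lt.min {u : WithTop J | ∀ t ∈ T, t ≤ u} (hlub0 T) with hlubdef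
  have lub_ub : ∀ (T : Set (WithTop J)) (t), t ∈ T → t ≤ lub T :=
    fun T t ht => (wellFounded_lt.min_mem {u : WithTop J | ∀ t ∈ T, t ≤ u} (hlub0 T)) t ht
  have lub_le : ∀ (T : Set (WithTop J)) (u), (∀ t ∈ T, t ≤ u) → lub T ≤ u :=
    fun T u hu => le_of_not_gt (fun h =>
      wellFounded_lt.not_lt_min {u : WithTop J | ∀ t ∈ T, t ≤ u} hu h)
  -- successor step
  obtain ⟨z₀, hz₀A, hz₀mem, hz₀1, hz₀2⟩ := hH (Ioi c₀ ×ˢ Ioi d₀)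
    (isOpen_Ioi.prod isOpen_Ioi) ⟨hc₀lt, hd₀lt⟩
  set step : WithTop J × WithTop J → WithTop J × WithTop J := fun prev =>
    if h : prev.1 < x.1 ∧ prev.2 < x.2 then
      Classical.choose (hH (Ioi prev.1 ×ˢ Ioi prev.2) (isOpen_Ioi.prod isOpen_Ioi)
        ⟨h.1, h.2⟩)
    else x with hstepdef
  have step_spec : ∀ prev : WithTop J × WithTop J, prev.1 < x.1 → prev.2 < x.2 →
      step prev ∈ A ∧ prev.1 < (step prev).1 ∧ (step prev).1 < x.1 ∧
        prev.2 < (step prev).2 ∧ (step prev).2 < x.2 := by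
    intro prev h1 h2
    have h : prev.1 < x.1 ∧ prev.2 < x.2 := ⟨h1, h2⟩
    have : step prev = Classical.choose (hH (Ioi prev.1 ×ˢ Ioi prev.2)
        (isOpen_Ioi.prod isOpen_Ioi) ⟨h.1, h.2⟩) := by
      rw [hstepdef]; exact dif_pos h
    have hspec := Classical.choose_spec (hH (Ioi prev.1 ×ˢ Ioi prev.2)
        (isOpen_Ioi.prod isOpen_Ioi) ⟨h.1, h.2⟩)
    rw [← this] at hspec
    exact ⟨hspec.1, hspec.2.1.1, hspec.2.2.1, hspec.2.1.2, hspec.2.2.2⟩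
  -- transfinite recursion
  obtain ⟨φ, hφ0, hφsucc, hφlim⟩ :
      ∃ φ : Ordinal.{v} → WithTop J × WithTop J,
        φ 0 = z₀ ∧ (∀ o, φ (Order.succ o) = step (φ o)) ∧
        (∀ o : Ordinal.{v}, Order.IsSuccLimit o →
          φ o = (lub {p | ∃ o', ∃ _ : o' < o, (φ o').1 = p},
                 lub {p | ∃ o', ∃ _ : o' < o, (φ o').2 = p})) := by
    refine ⟨fun o => Ordinal.limitRecOn o z₀ (fun _ ih => step ih)
      (fun o _ IH => (lub {p | ∃ o', ∃ h : o' < o, (IH o' h).1 = p},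
                      lub {p | ∃ o', ∃ h : o' < o, (IH o' h).2 = p})), ?_, ?_, ?_⟩
    · exact Ordinal.limitRecOn_zero _ _ _
    · intro o; exact Ordinal.limitRecOn_succ _ _ _ _
    · intro o ho
      dsimp only
      rw [Ordinal.limitRecOn_limit _ _ _ _ ho]
  -- goodness below and strict monotonicity
  have mono : ∀ o : Ordinal.{v}, (∀ o'' < o, (φ o'').1 < x.1 ∧ (φ o'').2 < x.2) →
      ∀ o' < o, (φ o').1 < (φ o).1 ∧ (φ o').2 < (φ o).2 := by
    intro o
    induction o using Ordinal.induction with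
    | _ o IH =>
      intro hgoods o' ho'
      rcases Ordinal.zero_or_succ_or_isSuccLimit o with rfl | ⟨o'', rfl⟩ | hlim
      · exact absurd ho' (not_lt_zero (a := o'))
      · have hg := hgoods o'' (Order.lt_succ o'')
        have hs := step_spec (φ o'') hg.1 hg.2
        rw [hφsucc o'']
        rcases eq_or_lt_of_le (Order.le_of_lt_succ ho') with rfl | ho''
        · exact ⟨hs.2.1, hs.2.2.2.1⟩
        · have := IH o'' (Order.lt_succ o'')
            (fun o₃ h₃ => hgoods o₃ (h₃.trans (Order.lt_succ o''))) o' ho''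
          exact ⟨this.1.trans hs.2.1, this.2.trans hs.2.2.2.1⟩
      · have hsucc_lt : Order.succ o' < o := hlim.succ_lt ho'
        have hg := hgoods o' ho'
        have hs := step_spec (φ o') hg.1 hg.2
        rw [hφlim o hlim]
        constructor
        · exact lt_of_lt_of_le (by rw [hφsucc o']; exact hs.2.1)
            (lub_ub _ _ ⟨Order.succ o', hsucc_lt, rfl⟩)
        · exact lt_of_lt_of_le (by rw [hφsucc o']; exact hs.2.2.2.1)
            (lub_ub _ _ ⟨Order.succ o', hsucc_lt, rfl⟩)
  -- termination
  have hstop : {o : Ordinal.{v} | ¬((φ o).1 < x.1 ∧ (φ o).2 < x.2)}.Nonempty := by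
    by_contra h
    rw [not_nonempty_iff_eq_empty] at h
    have hall : ∀ o : Ordinal.{v}, (φ o).1 < x.1 ∧ (φ o).2 < x.2 := by
      intro o
      by_contra h'
      exact absurd (h ▸ (h' : o ∈ _)) (notMem_empty o)
    have mono' : ∀ o' o : Ordinal.{v}, o' < o → (φ o').1 < (φ o).1 :=
      fun o' o h' => (mono o (fun o'' _ => hall o'') o' h').1
    set r : WithTop J → WithTop J → Prop := (· < ·) with hr
    have hinj : ∀ o : Ordinal.{v}, o ≤ (Ordinal.typein r).toRelEmbedding (φ o).1 := by
      intro o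
      induction o using Ordinal.induction with
      | _ o IH =>
        by_contra hcon
        have ht : (Ordinal.typein r).toRelEmbedding (φ o).1 < o := lt_of_not_ge hcon
        have h1 := IH _ ht
        have h2 : (Ordinal.typein r).toRelEmbedding
            (φ ((Ordinal.typein r).toRelEmbedding (φ o).1)).1 <
            (Ordinal.typein r).toRelEmbedding (φ o).1 :=
          (Ordinal.typein_lt_typein r).mpr (mono' _ _ ht)
        exact absurd (h1.trans_lt h2) (lt_irrefl _)
    have h1 := hinj (Ordinal.type r)
    have h2 := Ordinal.typein_lt_type r (φ (Ordinal.type r)).1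
    exact absurd (h1.trans_lt h2) (lt_irrefl _)
  set lam := sInf {o : Ordinal.{v} | ¬((φ o).1 < x.1 ∧ (φ o).2 < x.2)} with hlamdef
  have hlamBAD : ¬((φ lam).1 < x.1 ∧ (φ lam).2 < x.2) := csInf_mem hstop
  have hgood : ∀ o < lam, (φ o).1 < x.1 ∧ (φ o).2 < x.2 := by
    intro o ho
    by_contra h
    exact notMem_of_lt_csInf ho ⟨0, fun y _ => zero_le (a := y)⟩ h
  have hlam_lim : Order.IsSuccLimit lam := by
    rcases Ordinal.zero_or_succ_or_isSuccLimit lam with h0 | ⟨o'', hsucc⟩ | hlim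
    · exact absurd (h0 ▸ (hφ0 ▸ ⟨hz₀1, hz₀2⟩ :
        ((φ 0).1 < x.1 ∧ (φ 0).2 < x.2))) hlamBAD
    · have hg := hgood o'' (hsucc ▸ Order.lt_succ o'')
      have hs := step_spec (φ o'') hg.1 hg.2
      exact absurd (by rw [← hsucc, hφsucc o'']; exact ⟨hs.2.2.1, hs.2.2.2.2⟩) hlamBAD
    · exact hlim
  have hlampair := hφlim lam hlam_lim
  have hmono_le : ∀ o' o : Ordinal.{v}, o' ≤ o → o ≤ lam →
      (φ o').1 ≤ (φ o).1 ∧ (φ o').2 ≤ (φ o).2 := by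
    intro o' o h hl
    rcases eq_or_lt_of_le h with rfl | h
    · exact ⟨le_rfl, le_rfl⟩
    · have := mono o (fun o'' h'' => hgood o'' (lt_of_lt_of_le h'' hl)) o' h
      exact ⟨this.1.le, this.2.le⟩
  have hmono_lt : ∀ o' o : Ordinal.{v}, o' < o → o ≤ lam →
      (φ o').1 < (φ o).1 ∧ (φ o').2 < (φ o).2 :=
    fun o' o h hl => mono o (fun o'' h'' => hgood o'' (lt_of_lt_of_le h'' hl)) o' h
  have hs₁le : (φ lam).1 ≤ x.1 := by
    rw [hlampair]
    exact lub_le _ _ (by rintro t ⟨o', ho', rfl⟩; exact (hgood o' ho').1.le)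
  have hs₂le : (φ lam).2 ≤ x.2 := by
    rw [hlampair]
    exact lub_le _ _ (by rintro t ⟨o', ho', rfl⟩; exact (hgood o' ho').2.le)
  -- membership in A below lam
  have hInA : ∀ o < lam, φ o ∈ A := by
    intro o
    induction o using Ordinal.induction with
    | _ o IH =>
      intro ho
      rcases Ordinal.zero_or_succ_or_isSuccLimit o with rfl | ⟨o'', rfl⟩ | hlim
      · rw [hφ0]; exact hz₀A
      · have hg := hgood o'' ((Order.lt_succ o'').trans ho)
        rw [hφsucc o'']
        exact (step_spec (φ o'') hg.1 hg.2).1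
      · have hopair := hφlim o hlim
        have hg := hgood o ho
        have hmem : φ o ∈ closure A := by
          rw [mem_closure_iff]
          intro O hO hxO
          obtain ⟨W₁, W₂, hW₁o, hW₂o, h1', h2', hbox'⟩ :=
            isOpen_prod_iff.mp hO (φ o).1 (φ o).2 (by rw [Prod.mk.eta]; exact hxO)
          have h0lt : (0 : Ordinal.{v}) < o := hlim.pos
          have hlt0 := hmono_lt 0 o h0lt ho.le
          obtain ⟨c₁, hc₁, hIoc₁⟩ :=
            exists_Ioc_subset_of_mem_nhds (hW₁o.mem_nhds h1') ⟨(φ 0).1, hlt0.1⟩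
          obtain ⟨c₂, hc₂, hIoc₂⟩ :=
            exists_Ioc_subset_of_mem_nhds (hW₂o.mem_nhds h2') ⟨(φ 0).2, hlt0.2⟩
          have hex₁ : ∃ o₁ < o, c₁ < (φ o₁).1 := by
            by_contra hcon
            push_neg at hcon
            have : (φ o).1 ≤ c₁ := by
              rw [hopair]
              exact lub_le _ _ (by rintro t ⟨o', ho', rfl⟩; exact hcon o' ho')
            exact absurd hc₁ (not_lt_of_ge this)
          have hex₂ : ∃ o₂ < o, c₂ < (φ o₂).2 := by
            by_contra hcon
            push_neg at hcon
            have : (φ o).2 ≤ c₂ := by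
              rw [hopair]
              exact lub_le _ _ (by rintro t ⟨o', ho', rfl⟩; exact hcon o' ho')
            exact absurd hc₂ (not_lt_of_ge this)
          obtain ⟨o₁, ho₁, hc₁'⟩ := hex₁
          obtain ⟨o₂, ho₂, hc₂'⟩ := hex₂
          set o' := max o₁ o₂ with ho'def
          have ho'lt : o' < o := max_lt ho₁ ho₂
          have hle₁ := (hmono_le o₁ o' (le_max_left _ _) (ho'lt.le.trans ho.le)).1
          have hle₂ := (hmono_le o₂ o' (le_max_right _ _) (ho'lt.le.trans ho.le)).2
          have hub₁ : (φ o').1 ≤ (φ o).1 := by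
            rw [hopair]; exact lub_ub _ _ ⟨o', ho'lt, rfl⟩
          have hub₂ : (φ o').2 ≤ (φ o).2 := by
            rw [hopair]; exact lub_ub _ _ ⟨o', ho'lt, rfl⟩
          refine ⟨φ o', hbox' ?_, IH o' ho'lt (ho'lt.trans ho)⟩
          rw [← Prod.mk.eta (p := φ o')]
          exact ⟨hIoc₁ ⟨hc₁'.trans_le hle₁, hub₁⟩, hIoc₂ ⟨hc₂'.trans_le hle₂, hub₂⟩⟩
        by_contra hnotA
        exact absurd ⟨hg.1, hg.2⟩ (hxmin (φ o) ⟨hmem, hnotA⟩)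
  -- lower bounds at lam
  have h0lam : (0 : Ordinal.{v}) < lam := hlam_lim.pos
  have hz₀c₀ : c₀ < (φ 0).1 := by rw [hφ0]; exact hz₀mem.1
  have hz₀d₀ : d₀ < (φ 0).2 := by rw [hφ0]; exact hz₀mem.2
  have hgt := hmono_lt 0 lam h0lam le_rfl
  have hs₁gt : c₀ < (φ lam).1 := hz₀c₀.trans hgt.1
  have hs₂gt : d₀ < (φ lam).2 := hz₀d₀.trans hgt.2
  -- the final point is not in A
  have hfinal : φ lam ∉ A := by
    intro hmemA
    rcases Classical.em ((φ lam).1 = x.1) with h1 | h1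
    · have h2 : (φ lam).2 ∈ U₂ := hIocU₂ ⟨hs₂gt, hs₂le⟩
      have h1' : (φ lam).1 ∈ U₁ := h1 ▸ hxU₁
      have : φ lam ∈ V₁ ∩ (A ∩ {y | y.1 = x.1}) :=
        ⟨(hbox (by rw [← Prod.mk.eta (p := φ lam)]; exact ⟨h1', h2⟩)).1, hmemA, h1⟩
      rw [hV₁] at this
      exact absurd this (notMem_empty _)
    · have hs₁lt : (φ lam).1 < x.1 := lt_of_le_of_ne hs₁le h1
      have h2 : (φ lam).2 = x.2 := by
        by_contra h2
        exact hlamBAD ⟨hs₁lt, lt_of_le_of_ne hs₂le h2⟩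
      have h1' : (φ lam).1 ∈ U₁ := hIocU₁ ⟨hs₁gt, hs₁le⟩
      have h2' : (φ lam).2 ∈ U₂ := h2 ▸ hxU₂
      have : φ lam ∈ V₂ ∩ (A ∩ {y | y.2 = x.2}) :=
        ⟨(hbox (by rw [← Prod.mk.eta (p := φ lam)]; exact ⟨h1', h2'⟩)).2, hmemA, h2⟩
      rw [hV₂] at this
      exact absurd this (notMem_empty _)
  -- coordinate sequences
  set ψ₁ : Ordinal.{v} → WithTop J := fun o => (φ o).1 with hψ₁def
  set ψ₂ : Ordinal.{v} → WithTop J := fun o => (φ o).2 with hψ₂def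
  have hψ₁mono : ∀ o' o : Ordinal.{v}, o' < o → o ≤ lam → ψ₁ o' < ψ₁ o :=
    fun o' o h hl => (hmono_lt o' o h hl).1
  have hψ₂mono : ∀ o' o : Ordinal.{v}, o' < o → o ≤ lam → ψ₂ o' < ψ₂ o :=
    fun o' o h hl => (hmono_lt o' o h hl).2
  have hψ₁lub : ∀ o ≤ lam, Order.IsSuccLimit o → ∀ u, (∀ o' < o, ψ₁ o' ≤ u) → ψ₁ o ≤ u := by
    intro o _ hlim u hu
    show (φ o).1 ≤ u
    rw [hφlim o hlim]
    exact lub_le _ _ (by rintro t ⟨o', ho', rfl⟩; exact hu o' ho')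
  have hψ₂lub : ∀ o ≤ lam, Order.IsSuccLimit o → ∀ u, (∀ o' < o, ψ₂ o' ≤ u) → ψ₂ o ≤ u := by
    intro o _ hlim u hu
    show (φ o).2 ≤ u
    rw [hφlim o hlim]
    exact lub_le _ _ (by rintro t ⟨o', ho', rfl⟩; exact hu o' ho')
  have hcl₁ : IsClosed (ψ₁ '' Iic lam) := aux_closed_image ψ₁ lam hψ₁mono hψ₁lub
  have hcl₂ : IsClosed (ψ₂ '' Iic lam) := aux_closed_image ψ₂ lam hψ₂mono hψ₂lub
  set C : Set (WithTop J) := ψ₁ '' Iio lam with hCdef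
  set ℓ : WithTop J := ψ₁ lam with hℓdef
  have hCbound : ∀ t ∈ C, t < ℓ := by rintro t ⟨o, ho, rfl⟩; exact hψ₁mono o lam ho le_rfl
  have hIicC : ψ₁ '' Iic lam = C ∪ {ℓ} := by
    rw [hCdef, hℓdef, ← Iio_union_right, image_union, image_singleton]
  have happr : ∀ c < ℓ, ∃ t ∈ C, c < t ∧ t < ℓ := by
    intro c hc
    have hex : ∃ o₁ < lam, c < ψ₁ o₁ := by
      by_contra hcon
      push_neg at hcon
      have hle : ℓ ≤ c := by
        show (φ lam).1 ≤ c
        rw [hlampair]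
        exact lub_le _ _ (by rintro t ⟨o', ho', rfl⟩; exact hcon o' ho')
      exact absurd hc (not_lt_of_ge hle)
    obtain ⟨o₁, ho₁, hc₁⟩ := hex
    exact ⟨ψ₁ o₁, ⟨o₁, ho₁, rfl⟩, hc₁, hψ₁mono o₁ lam ho₁ le_rfl⟩
  have hℓcl : ℓ ∈ closure C :=
    aux_mem_closure ⟨ψ₁ 0, hψ₁mono 0 lam h0lam le_rfl⟩ happr
  have hℓnotC : ℓ ∉ C := fun h => absurd (hCbound _ h) (lt_irrefl _)
  have hsubCl : closure C ⊆ C ∪ {ℓ} := by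
    have h1 : C ⊆ ψ₁ '' Iic lam := by rw [hIicC]; exact subset_union_left
    have h2 := hcl₁.closure_subset_iff.mpr h1
    rwa [hIicC] at h2
  have hdiffC : closure C \ C = {ℓ} := by
    apply Subset.antisymm
    · rintro p ⟨hp, hpC⟩
      rcases hsubCl hp with h | h
      · exact absurd h hpC
      · exact h
    · rintro p rfl
      exact ⟨hℓcl, hℓnotC⟩
  have hleastC : IsLeast {s | ∀ t ∈ C, t < s} ℓ := by
    refine ⟨hCbound, fun u hu => ?_⟩
    show (φ lam).1 ≤ u
    rw [hlampair]
    exact lub_le _ _ (by rintro t ⟨o', ho', rfl⟩; exact (hu _ ⟨o', ho', rfl⟩).le)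
  obtain ⟨hAC, hmonoι, hcontι⟩ := aux_package hCbound hdiffC hleastC
  set I : Set J := {j : J | (j : WithTop J) ∈ C} with hIdef
  haveI : OrderTopology (WithTop ↥I) := ⟨rfl⟩
  set ord : ↥I → Ordinal.{v} := fun i => sInf {o | ψ₁ o = ((i : J) : WithTop J)} with horddef
  have hord : ∀ i : ↥I, ψ₁ (ord i) = ((i : J) : WithTop J) ∧ ord i < lam := by
    intro i
    obtain ⟨o, ho, heq⟩ := i.2
    have hne : {o : Ordinal.{v} | ψ₁ o = ((i : J) : WithTop J)}.Nonempty := ⟨o, heq⟩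
    have hmem := csInf_mem hne
    have hle : ord i ≤ o := csInf_le ⟨0, fun y _ => zero_le (a := y)⟩ heq
    exact ⟨hmem, lt_of_le_of_lt hle ho⟩
  set F : WithTop ↥I → WithTop J × WithTop J :=
    WithTop.recTopCoe (φ lam) (fun i => φ (ord i)) with hFdef
  have hordlt : ∀ i i' : ↥I, i < i' → ord i < ord i' := by
    intro i i' h
    have h1 : ψ₁ (ord i) < ψ₁ (ord i') := by
      rw [(hord i).1, (hord i').1]
      exact WithTop.coe_lt_coe.mpr (Subtype.coe_lt_coe.mpr h)
    by_contra hcon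
    have h2 := hmono_le (ord i') (ord i) (le_of_not_gt hcon) (hord i).2.le
    exact absurd h1 (not_lt_of_ge h2.1)
  have hF₂mono : StrictMono (fun z => (F z).2) := by
    intro z z' hzz
    induction z using WithTop.recTopCoe with
    | top => exact absurd hzz (by simp [not_top_lt])
    | coe i =>
      induction z' using WithTop.recTopCoe with
      | top =>
        show (φ (ord i)).2 < (φ lam).2
        exact (hmono_lt _ _ (hord i).2 le_rfl).2
      | coe i' =>
        have hii' : i < i' := WithTop.coe_lt_coe.mp hzz
        show (φ (ord i)).2 < (φ (ord i')).2
        exact (hmono_lt _ _ (hordlt i i' hii') (hord i').2.le).2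
  have hF₂range : range (fun z => (F z).2) = ψ₂ '' Iic lam := by
    ext t
    constructor
    · rintro ⟨z, rfl⟩
      induction z using WithTop.recTopCoe with
      | top => exact ⟨lam, self_mem_Iic, rfl⟩
      | coe i => exact ⟨ord i, (hord i).2.le, rfl⟩
    · rintro ⟨o, ho, rfl⟩
      rw [mem_Iic] at ho
      rcases eq_or_lt_of_le ho with rfl | ho'
      · exact ⟨⊤, rfl⟩
      · have hgo := hgood o ho'
        have hne_top : (φ o).1 ≠ ⊤ := fun h => absurd (h ▸ hgo.1) not_top_lt
        obtain ⟨j, hj⟩ := WithTop.ne_top_iff_exists.mp hne_top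
        have hjI : j ∈ I := ⟨o, ho', hj.symm⟩
        have hordeq : ord (⟨j, hjI⟩ : ↥I) = o := by
          have h1 := (hord ⟨j, hjI⟩).1
          have h2 : ψ₁ (ord (⟨j, hjI⟩ : ↥I)) = ψ₁ o := h1.trans hj
          rcases lt_trichotomy (ord (⟨j, hjI⟩ : ↥I)) o with h | h | h
          · exact absurd h2 (ne_of_lt (hψ₁mono _ _ h ho'.le))
          · exact h
          · exact absurd h2.symm (ne_of_lt (hψ₁mono _ _ h (hord ⟨j, hjI⟩).2.le))
        exact ⟨WithTop.some (⟨j, hjI⟩ : ↥I),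
          by show (φ (ord (⟨j, hjI⟩ : ↥I))).2 = ψ₂ o; rw [hordeq]⟩
  have hcontF₂ : Continuous (fun z => (F z).2) := aux_cont_s7 _ hF₂mono (hF₂range ▸ hcl₂)
  have hF₁eq : (fun z => (F z).1) =
      (WithTop.recTopCoe ℓ (fun i : ↥I => ((i : J) : WithTop J))) := by
    funext z
    induction z using WithTop.recTopCoe with
    | top => rfl
    | coe i => exact (hord i).1
  have hcontF₁ : Continuous (fun z => (F z).1) := by rw [hF₁eq]; exact hcontι
  have hcontF : Continuous F := by
    have heta : F = fun z => ((F z).1, (F z).2) := funext fun z => (Prod.mk.eta).symm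
    rw [heta]
    exact hcontF₁.prodMk hcontF₂
  refine ⟨I, hAC, F, hcontF, ?_, ?_⟩
  · intro i
    show φ (ord i) ∈ A
    exact hInA _ (hord i).2
  · show φ lam ∉ A
    exact hfinal
end Diag

-- STATEMENT 7
theorem stmt7 {J : Type v} [LinearOrder J] [WellFoundedLT J] [TopologicalSpace J]
    [OrderTopology J] [NoncompactSpace J] :
    IsJConvergence J (WithTop J × WithTop J) := by
  intro A hA
  have hD : (closure A \ A).Nonempty := by
    by_contra h
    rw [not_nonempty_iff_eq_empty, diff_eq_empty] at h
    exact hA (isClosed_of_closure_subset h)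
  have hwf : WellFounded (fun u v : WithTop J × WithTop J => u.1 < v.1 ∧ u.2 < v.2) :=
    Subrelation.wf (fun {u v} h => h.1) (InvImage.wf Prod.fst wellFounded_lt)
  obtain ⟨x, hxD, hxmin⟩ := hwf.has_min _ hD
  by_cases hvert : x ∈ closure (A ∩ {y | y.1 = x.1})
  · exact aux_vert hxD.2 hvert
  by_cases hhor : x ∈ closure (A ∩ {y | y.2 = x.2})
  · exact aux_horiz hxD.2 hhor
  exact aux_diag hxD.1 hxD.2 hxmin hvert hhor
end
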